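/- arXiv:2308.13424 — 4 statements merged into one kernel-verified Lean document; each statement's English description precedes it below -/
import Mathlib

section
/- Fix an integer L ≥ 1 and real numbers R, ε ∈ (0,1). For every sufficiently large n there exists an integer q with 2 ≤ q ≤ 2^{4/ε}, a finite alphabet Σ of size q, and a code C ⊆ Σ^n with |C| ≥ q^{Rn}/2 that is ((L/(L+1))·(1−R−ε), L)-list-decodable. -/
set_option maxHeartbeats 1000000

open Finset

private lemma emb_congr {α : Type*} [LinearOrder α] (s s' : Finset α) (h : s = s') (t : ℕ)
    (h1 : t < s.card) (h2 : t < s'.card) :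
    s.orderEmbOfFin rfl ⟨t, h1⟩ = s'.orderEmbOfFin rfl ⟨t, h2⟩ := by
  subst h; rfl

lemma ball_card_le (n q e : ℕ) (hq : 0 < q) (y : Fin n → Fin q) :
    ((Finset.univ.filter fun c : Fin n → Fin q => hammingDist y c ≤ e)).card ≤ 2 ^ n * q ^ e := by
  classical
  set D : (Fin n → Fin q) → Finset (Fin n) := fun c => Finset.univ.filter (fun j => y j ≠ c j) with hD
  have hDcard : ∀ c, (D c).card = hammingDist y c := by
    intro c; rfl
  set g : (Fin n → Fin q) → (Fin e → Fin q) := fun c t =>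
    if h : (t : ℕ) < (D c).card then c ((D c).orderEmbOfFin rfl ⟨(t : ℕ), h⟩) else ⟨0, hq⟩ with hg
  have hmap : ∀ c ∈ (Finset.univ.filter fun c : Fin n → Fin q => hammingDist y c ≤ e),
      (D c, g c) ∈ (Finset.univ : Finset (Finset (Fin n) × (Fin e → Fin q))) := by
    intro c _; exact Finset.mem_univ _
  have hinj : Set.InjOn (fun c => (D c, g c))
      ((Finset.univ.filter fun c : Fin n → Fin q => hammingDist y c ≤ e) : Finset _) := by
    intro c₁ h₁ c₂ h₂ hEq
    simp only [Finset.coe_filter, Set.mem_setOf_eq, Finset.mem_univ, true_and] at h₁ h₂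
    have hDeq : D c₁ = D c₂ := congrArg Prod.fst hEq
    have hgeq : g c₁ = g c₂ := congrArg Prod.snd hEq
    funext j
    by_cases hj : j ∈ D c₁
    · have hrange := Finset.range_orderEmbOfFin (D c₁) (rfl : (D c₁).card = (D c₁).card)
      have : (j : Fin n) ∈ Set.range ((D c₁).orderEmbOfFin rfl) := by
        rw [hrange]; exact hj
      obtain ⟨t, ht⟩ := this
      have htlt : (t : ℕ) < (D c₁).card := t.2
      have hte : (t : ℕ) < e := lt_of_lt_of_le htlt (by rw [hDcard]; exact h₁)
      have htlt2 : (t : ℕ) < (D c₂).card := by rw [← hDeq]; exact htlt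
      have e1 : g c₁ ⟨(t : ℕ), hte⟩ = c₁ j := by
        rw [hg]; dsimp only
        rw [dif_pos htlt]
        exact congrArg c₁ (by rw [← ht])
      have e2 : g c₂ ⟨(t : ℕ), hte⟩ = c₂ j := by
        rw [hg]; dsimp only
        rw [dif_pos htlt2]
        exact congrArg c₂ (by rw [emb_congr (D c₂) (D c₁) hDeq.symm (t : ℕ) htlt2 htlt, ← ht])
      rw [← e1, hgeq, e2]
    · have hj2 : j ∉ D c₂ := by rw [← hDeq]; exact hj
      simp only [hD, Finset.mem_filter, Finset.mem_univ, true_and, not_not] at hj hj2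
      rw [← hj, ← hj2]
  calc ((Finset.univ.filter fun c : Fin n → Fin q => hammingDist y c ≤ e)).card
      ≤ (Finset.univ : Finset (Finset (Fin n) × (Fin e → Fin q))).card :=
        Finset.card_le_card_of_injOn _ hmap hinj
    _ = 2 ^ n * q ^ e := by
        rw [Finset.card_univ, Fintype.card_prod, Fintype.card_finset, Fintype.card_fun]
        simp


lemma code_exists (n q L e K : ℕ) (hq : 0 < q) (hK : 1 ≤ K) (hML : L + 1 ≤ 2 * K)
    (hball : ∀ y : Fin n → Fin q,
      ((Finset.univ.filter fun c : Fin n → Fin q => hammingDist y c ≤ e)).card ≤ 2 ^ n * q ^ e)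
    (hI : 2 * (2 * K) ^ (L + 1) * (2 ^ n * q ^ e) ^ (L + 1) ≤ K * (q ^ n) ^ L)
    (hII : 8 * K ≤ q ^ n) :
    ∃ C : Finset (Fin n → Fin q), K ≤ C.card ∧
      ∀ y, (C.filter fun c => hammingDist y c ≤ e).card ≤ L := by
  classical
  set W := (Fin n → Fin q) with hW
  set M := 2 * K with hM
  set Qn := q ^ n with hQn
  set V := 2 ^ n * q ^ e with hV
  have hWcard : Fintype.card W = Qn := by
    simp [hW, hQn]
  have hM1 : 1 ≤ M := by omega
  -- bad events and collisions
  set P : Finset (W × Finset (Fin M)) :=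
    (Finset.univ : Finset W) ×ˢ ((Finset.univ : Finset (Fin M)).powersetCard (L + 1)) with hP
  set Bad : (Fin M → W) → Finset (W × Finset (Fin M)) := fun f =>
    P.filter (fun ys => ∀ i ∈ ys.2, hammingDist ys.1 (f i) ≤ e) with hBad
  set Col : (Fin M → W) → Finset (Fin M × Fin M) := fun f =>
    (Finset.univ : Finset (Fin M × Fin M)).filter (fun ij => ij.1 < ij.2 ∧ f ij.1 = f ij.2) with hCol
  -- count of f with all of s inside ball of y
  have countf : ∀ (y : W) (s : Finset (Fin M)), s.card = L + 1 →
      ((Finset.univ : Finset (Fin M → W)).filter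
          (fun f => ∀ i ∈ s, hammingDist y (f i) ≤ e)).card
        ≤ V ^ (L + 1) * Qn ^ (M - (L + 1)) := by
    intro y s hs
    have hfe : ((Finset.univ : Finset (Fin M → W)).filter
          (fun f => ∀ i ∈ s, hammingDist y (f i) ≤ e))
        = Fintype.piFinset (fun i => if i ∈ s then
            (Finset.univ.filter fun c : W => hammingDist y c ≤ e) else Finset.univ) := by
      ext f
      simp only [Finset.mem_filter, Finset.mem_univ, true_and, Fintype.mem_piFinset]
      constructor
      · intro h i
        by_cases hi : i ∈ s
        · rw [if_pos hi]
          simp only [Finset.mem_filter, Finset.mem_univ, true_and]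
          exact h i hi
        · rw [if_neg hi]; exact Finset.mem_univ _
      · intro h i hi
        have := h i
        rw [if_pos hi] at this
        simp only [Finset.mem_filter, Finset.mem_univ, true_and] at this
        exact this
    rw [hfe, Fintype.card_piFinset]
    have : ∀ i : Fin M, ((if i ∈ s then
        (Finset.univ.filter fun c : W => hammingDist y c ≤ e) else Finset.univ)).card
        = if i ∈ s then (Finset.univ.filter fun c : W => hammingDist y c ≤ e).card else Qn := by
      intro i
      split
      · rfl
      · rw [Finset.card_univ, hWcard]
    rw [Finset.prod_congr rfl (fun i _ => this i)]
    rw [← Finset.prod_sdiff (Finset.subset_univ s)]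
    have h1 : ∏ i ∈ (Finset.univ : Finset (Fin M)) \ s,
        (if i ∈ s then (Finset.univ.filter fun c : W => hammingDist y c ≤ e).card else Qn)
        = Qn ^ (M - (L + 1)) := by
      rw [Finset.prod_congr rfl (fun i hi => if_neg (Finset.mem_sdiff.1 hi).2),
        Finset.prod_const]
      congr 1
      rw [Finset.card_sdiff_of_subset (Finset.subset_univ s), Finset.card_univ, hs]
      simp
    have h2 : ∏ i ∈ s,
        (if i ∈ s then (Finset.univ.filter fun c : W => hammingDist y c ≤ e).card else Qn)
        = (Finset.univ.filter fun c : W => hammingDist y c ≤ e).card ^ (L + 1) := by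
      rw [Finset.prod_congr rfl (fun i hi => if_pos hi), Finset.prod_const, hs]
    rw [h1, h2, Nat.mul_comm]
    exact Nat.mul_le_mul_right _ (Nat.pow_le_pow_left (hball y) _)
  -- count of f with collision at a given pair
  have countp : ∀ ij : Fin M × Fin M,
      ((Finset.univ : Finset (Fin M → W)).filter
          (fun f => ij.1 < ij.2 ∧ f ij.1 = f ij.2)).card ≤ Qn ^ (M - 1) := by
    rintro ⟨i, j⟩
    by_cases hij : i < j
    · set w0 : W := fun _ => ⟨0, hq⟩ with hw0
      have hmap : ∀ f ∈ ((Finset.univ : Finset (Fin M → W)).filter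
            (fun f => i < j ∧ f i = f j)),
          Function.update f j w0 ∈ Fintype.piFinset
            (fun t => if t = j then ({w0} : Finset W) else Finset.univ) := by
        intro f _
        rw [Fintype.mem_piFinset]
        intro t
        by_cases ht : t = j
        · rw [if_pos ht, ht]
          simp [Function.update_self]
        · rw [if_neg ht]; exact Finset.mem_univ _
      have hinj : Set.InjOn (fun f : Fin M → W => Function.update f j w0)
          ↑((Finset.univ : Finset (Fin M → W)).filter (fun f => i < j ∧ f i = f j)) := by
        intro f₁ h₁ f₂ h₂ hEq
        simp only [Finset.coe_filter, Set.mem_setOf_eq, Finset.mem_univ, true_and] at h₁ h₂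
        have hEq' : ∀ x, Function.update f₁ j w0 x = Function.update f₂ j w0 x :=
          fun x => congrFun hEq x
        funext t
        by_cases ht : t = j
        · have hi := hEq' i
          rw [Function.update_of_ne (ne_of_lt hij), Function.update_of_ne (ne_of_lt hij)] at hi
          rw [ht, ← h₁.2, ← h₂.2]
          exact hi
        · have := hEq' t
          rwa [Function.update_of_ne ht, Function.update_of_ne ht] at this
      calc ((Finset.univ : Finset (Fin M → W)).filter (fun f => i < j ∧ f i = f j)).card
          ≤ (Fintype.piFinset (fun t => if t = j then ({w0} : Finset W) else Finset.univ)).card :=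
            Finset.card_le_card_of_injOn _ hmap hinj
        _ = Qn ^ (M - 1) := by
            rw [Fintype.card_piFinset]
            rw [← Finset.mul_prod_erase Finset.univ _ (Finset.mem_univ j)]
            rw [if_pos rfl]
            have : ∀ t ∈ (Finset.univ : Finset (Fin M)).erase j,
                ((if t = j then ({w0} : Finset W) else Finset.univ)).card = Qn := by
              intro t ht
              rw [if_neg (Finset.ne_of_mem_erase ht), Finset.card_univ, hWcard]
            rw [Finset.prod_congr rfl this, Finset.prod_const, Finset.card_singleton, one_mul,
              Finset.card_erase_of_mem (Finset.mem_univ j), Finset.card_univ]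
            simp
    · have : ((Finset.univ : Finset (Fin M → W)).filter (fun f => i < j ∧ f i = f j)) = ∅ := by
        apply Finset.filter_false_of_mem
        intro f _
        exact fun h => hij h.1
      rw [this]
      simp
  -- total over all f
  have hΩcard : ((Finset.univ : Finset (Fin M → W))).card = Qn ^ M := by
    rw [Finset.card_univ, Fintype.card_fun, hWcard, Fintype.card_fin]
  have sumBad : ∑ f ∈ (Finset.univ : Finset (Fin M → W)), (Bad f).card
      ≤ (Qn * M.choose (L + 1)) * (V ^ (L + 1) * Qn ^ (M - (L + 1))) := by
    have swap : ∑ f ∈ (Finset.univ : Finset (Fin M → W)), (Bad f).card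
        = ∑ ys ∈ P, ((Finset.univ : Finset (Fin M → W)).filter
            (fun f => ∀ i ∈ ys.2, hammingDist ys.1 (f i) ≤ e)).card := by
      simp_rw [hBad, Finset.card_filter]
      rw [Finset.sum_comm]
    rw [swap]
    have hPcard : P.card = Qn * M.choose (L + 1) := by
      rw [hP, Finset.card_product, Finset.card_powersetCard, Finset.card_univ, hWcard,
        Finset.card_univ, Fintype.card_fin]
    calc ∑ ys ∈ P, ((Finset.univ : Finset (Fin M → W)).filter
            (fun f => ∀ i ∈ ys.2, hammingDist ys.1 (f i) ≤ e)).card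
        ≤ ∑ _ys ∈ P, V ^ (L + 1) * Qn ^ (M - (L + 1)) := by
          apply Finset.sum_le_sum
          intro ys hys
          have hs : ys.2.card = L + 1 := by
            rw [hP] at hys
            exact (Finset.mem_powersetCard.1 (Finset.mem_product.1 hys).2).2
          exact countf ys.1 ys.2 hs
      _ = (Qn * M.choose (L + 1)) * (V ^ (L + 1) * Qn ^ (M - (L + 1))) := by
          rw [Finset.sum_const, smul_eq_mul, hPcard]
  have sumCol : ∑ f ∈ (Finset.univ : Finset (Fin M → W)), (Col f).card
      ≤ M * M * Qn ^ (M - 1) := by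
    have swap : ∑ f ∈ (Finset.univ : Finset (Fin M → W)), (Col f).card
        = ∑ ij ∈ (Finset.univ : Finset (Fin M × Fin M)),
            ((Finset.univ : Finset (Fin M → W)).filter
              (fun f => ij.1 < ij.2 ∧ f ij.1 = f ij.2)).card := by
      simp_rw [hCol, Finset.card_filter]
      rw [Finset.sum_comm]
    rw [swap]
    calc ∑ ij ∈ (Finset.univ : Finset (Fin M × Fin M)),
            ((Finset.univ : Finset (Fin M → W)).filter
              (fun f => ij.1 < ij.2 ∧ f ij.1 = f ij.2)).card
        ≤ ∑ _ij ∈ (Finset.univ : Finset (Fin M × Fin M)), Qn ^ (M - 1) :=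
          Finset.sum_le_sum fun ij _ => countp ij
      _ = M * M * Qn ^ (M - 1) := by
          rw [Finset.sum_const, smul_eq_mul, Finset.card_univ, Fintype.card_prod,
            Fintype.card_fin]
  -- master inequality
  have master : ∑ f ∈ (Finset.univ : Finset (Fin M → W)), ((Bad f).card + (Col f).card)
      ≤ Qn ^ M * K := by
    rw [Finset.sum_add_distrib]
    have hA : 2 * ((Qn * M.choose (L + 1)) * (V ^ (L + 1) * Qn ^ (M - (L + 1)))) ≤ Qn ^ M * K := by
      have hchoose : M.choose (L + 1) ≤ M ^ (L + 1) := Nat.choose_le_pow _ _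
      have hpow : Qn ^ L * Qn ^ (M - (L + 1)) * Qn = Qn ^ M := by
        rw [← pow_add, ← pow_succ]
        congr 1
        omega
      calc 2 * ((Qn * M.choose (L + 1)) * (V ^ (L + 1) * Qn ^ (M - (L + 1))))
          ≤ 2 * ((Qn * M ^ (L + 1)) * (V ^ (L + 1) * Qn ^ (M - (L + 1)))) := by
            apply Nat.mul_le_mul_left
            apply Nat.mul_le_mul_right
            exact Nat.mul_le_mul_left _ hchoose
        _ = (2 * M ^ (L + 1) * V ^ (L + 1)) * (Qn ^ (M - (L + 1)) * Qn) := by ring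
        _ ≤ (K * Qn ^ L) * (Qn ^ (M - (L + 1)) * Qn) := by
            exact Nat.mul_le_mul_right _ hI
        _ = K * (Qn ^ L * Qn ^ (M - (L + 1)) * Qn) := by ring
        _ = Qn ^ M * K := by rw [hpow]; ring
    have hB : 2 * (M * M * Qn ^ (M - 1)) ≤ Qn ^ M * K := by
      have hpow : Qn ^ (M - 1) * Qn = Qn ^ M := by
        rw [← pow_succ]
        congr 1
        omega
      calc 2 * (M * M * Qn ^ (M - 1)) = (8 * K) * K * Qn ^ (M - 1) := by
            rw [hM]; ring
        _ ≤ Qn * K * Qn ^ (M - 1) := by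
            exact Nat.mul_le_mul_right _ (Nat.mul_le_mul_right _ hII)
        _ = K * (Qn ^ (M - 1) * Qn) := by ring
        _ = Qn ^ M * K := by rw [hpow]; ring
    have := Nat.add_le_add (le_trans (Nat.mul_le_mul_left 2 sumBad) hA)
      (le_trans (Nat.mul_le_mul_left 2 sumCol) hB)
    omega
  -- extract a good f
  have hne : ((Finset.univ : Finset (Fin M → W))).Nonempty :=
    ⟨fun _ _ => ⟨0, hq⟩, Finset.mem_univ _⟩
  obtain ⟨f, -, hf⟩ := Finset.exists_le_of_sum_le hne
    (by
      rw [Finset.sum_const, smul_eq_mul, hΩcard]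
      exact master : ∑ f ∈ (Finset.univ : Finset (Fin M → W)), ((Bad f).card + (Col f).card)
        ≤ ∑ _f ∈ (Finset.univ : Finset (Fin M → W)), K)
  -- expurgation
  set pick : Finset (Fin M) → Fin M := fun s => if h : s.Nonempty then s.min' h else ⟨0, hM1⟩
    with hpick
  set D : Finset (Fin M) := (Bad f).image (fun ys => pick ys.2) ∪ (Col f).image Prod.fst with hDdef
  have hDcard : D.card ≤ K := by
    calc D.card ≤ ((Bad f).image (fun ys => pick ys.2)).card + ((Col f).image Prod.fst).card :=
          Finset.card_union_le _ _
      _ ≤ (Bad f).card + (Col f).card :=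
          Nat.add_le_add Finset.card_image_le Finset.card_image_le
      _ ≤ K := hf
  set T : Finset (Fin M) := Finset.univ \ D with hT
  have hTcard : K ≤ T.card := by
    rw [hT, Finset.card_sdiff_of_subset (Finset.subset_univ D), Finset.card_univ, Fintype.card_fin]
    omega
  have hinjT : Set.InjOn f ↑T := by
    intro i₁ h₁ i₂ h₂ hEq
    by_contra hne'
    have key : ∀ a b : Fin M, a < b → f a = f b → a ∈ T → False := by
      intro a b hab hfab haT
      have hmem : (a, b) ∈ Col f := by
        rw [hCol]
        simp only [Finset.mem_filter, Finset.mem_univ, true_and]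
        exact ⟨hab, hfab⟩
      have haD : a ∈ D := Finset.mem_union_right _ (Finset.mem_image.2 ⟨(a, b), hmem, rfl⟩)
      exact (Finset.mem_sdiff.1 haT).2 haD
    rcases lt_or_gt_of_ne hne' with hlt | hgt
    · exact key i₁ i₂ hlt hEq (Finset.mem_coe.1 h₁)
    · exact key i₂ i₁ hgt hEq.symm (Finset.mem_coe.1 h₂)
  refine ⟨T.image f, ?_, ?_⟩
  · rw [Finset.card_image_of_injOn hinjT]
    exact hTcard
  · intro y
    by_contra hcon
    push_neg at hcon
    have hL1 : L + 1 ≤ ((T.image f).filter fun c => hammingDist y c ≤ e).card := hcon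
    set s₀ := T.filter (fun i => hammingDist y (f i) ≤ e) with hs₀
    have hsub : ((T.image f).filter fun c => hammingDist y c ≤ e) ⊆ s₀.image f := by
      intro c hc
      rcases Finset.mem_filter.1 hc with ⟨hcC, hdist⟩
      rcases Finset.mem_image.1 hcC with ⟨i, hiT, rfl⟩
      exact Finset.mem_image.2 ⟨i, Finset.mem_filter.2 ⟨hiT, hdist⟩, rfl⟩
    have hs₀card : L + 1 ≤ s₀.card :=
      le_trans hL1 (le_trans (Finset.card_le_card hsub) Finset.card_image_le)
    obtain ⟨s, hss₀, hscard⟩ := Finset.exists_subset_card_eq hs₀card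
    have hsne : s.Nonempty := Finset.card_pos.1 (by omega)
    have hbad : (y, s) ∈ Bad f := by
      rw [hBad]
      refine Finset.mem_filter.2 ⟨?_, ?_⟩
      · rw [hP]
        exact Finset.mem_product.2 ⟨Finset.mem_univ _,
          Finset.mem_powersetCard.2 ⟨Finset.subset_univ _, hscard⟩⟩
      · intro i hi
        exact (Finset.mem_filter.1 (hss₀ hi)).2
    have hpickD : pick s ∈ D :=
      Finset.mem_union_left _ (Finset.mem_image.2 ⟨(y, s), hbad, rfl⟩)
    have hpickS : pick s ∈ s := by
      rw [hpick]
      dsimp only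
      rw [dif_pos hsne]
      exact s.min'_mem hsne
    have hpickT : pick s ∈ T := (Finset.mem_filter.1 (hss₀ hpickS)).1
    exact (Finset.mem_sdiff.1 hpickT).2 hpickD


/-- A code `C ⊆ A^n` is `(p, L)`-list-decodable if every Hamming ball of
radius `p·n` contains at most `L` codewords. -/
def ListDecodable {n : ℕ} {A : Type*} [DecidableEq A] (C : Finset (Fin n → A)) (p : ℝ) (L : ℕ) : Prop :=
  ∀ y : Fin n → A, (C.filter (fun c => (hammingDist y c : ℝ) ≤ p * n)).card ≤ L

theorem stmt_2 (L : ℕ) (hL : 1 ≤ L) (R ε : ℝ) (hR0 : 0 < R) (hR1 : R < 1)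
    (hε0 : 0 < ε) (hε1 : ε < 1) :
    ∃ n₀ : ℕ, ∀ n : ℕ, n₀ ≤ n →
      ∃ q : ℕ, 2 ≤ q ∧ (q : ℝ) ≤ 2 ^ (4 / ε) ∧
        ∃ C : Finset (Fin n → Fin q), (q : ℝ) ^ (R * n) / 2 ≤ (C.card : ℝ) ∧
          ListDecodable C ((L : ℝ) / ((L : ℝ) + 1) * (1 - R - ε)) L := by
  classical
  set k : ℕ := ⌈(3 : ℝ) / ε⌉₊ with hkdef
  set q : ℕ := 2 ^ k with hqdef
  have hk3 : (3 : ℝ) / ε ≤ (k : ℝ) := Nat.le_ceil _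
  have hk3' := hk3
  have hk1 : 1 ≤ k := by
    have : (0 : ℝ) < 3 / ε := by positivity
    exact Nat.one_le_iff_ne_zero.2 (by
      intro h
      rw [hkdef] at h
      have := Nat.ceil_eq_zero.1 h
      linarith)
  clear_value k
  have hq2 : 2 ≤ q := by
    calc 2 = 2 ^ 1 := by norm_num
      _ ≤ 2 ^ k := Nat.pow_le_pow_right (by norm_num) hk1
      _ = q := hqdef.symm
  clear_value q
  have hq0 : 0 < q := by omega
  have hεk : 3 ≤ ε * k := by
    have := (div_le_iff₀ hε0).1 hk3
    linarith
  have hqr : (q : ℝ) = (2 : ℝ) ^ (k : ℝ) := by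
    rw [hqdef]
    push_cast
    rw [Real.rpow_natCast]
  have hqle : (q : ℝ) ≤ 2 ^ (4 / ε) := by
    rw [hqr]
    apply Real.rpow_le_rpow_of_exponent_le one_le_two
    have h1 : (k : ℝ) < 3 / ε + 1 := by
      have h1' : ((⌈(3 : ℝ) / ε⌉₊ : ℕ) : ℝ) < 3 / ε + 1 :=
        Nat.ceil_lt_add_one (by positivity)
      rw [← hkdef] at h1'
      exact h1'
    have h2 : (1 : ℝ) ≤ 1 / ε := one_le_one_div hε0 hε1.le
    have h3 : (3 : ℝ) / ε + 1 / ε = 4 / ε := by ring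
    linarith
  set p : ℝ := (L : ℝ) / ((L : ℝ) + 1) * (1 - R - ε) with hpdef
  clear_value p
  have hL1R : (1 : ℝ) ≤ (L : ℝ) := by exact_mod_cast hL
  have hLfrac0 : (0 : ℝ) ≤ (L : ℝ) / ((L : ℝ) + 1) := by positivity
  by_cases hRε : R + ε < 1
  · -- main case
    set δ : ℝ := 1 - R - ε with hδdef
    clear_value δ
    have hδ0 : 0 < δ := by rw [hδdef]; linarith
    have hp0 : 0 ≤ p := by
      rw [hpdef]
      exact mul_nonneg hLfrac0 (by linarith)
    have hpid : p * ((L : ℝ) + 1) = (L : ℝ) * δ := by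
      rw [hpdef, hδdef]
      field_simp
    refine ⟨⌈((L : ℝ) + 1) / R⌉₊ + ⌈3 / (1 - R)⌉₊ + 5, ?_⟩
    intro n hn
    have hn5 : 5 ≤ n := by omega
    have hn5R : (5 : ℝ) ≤ (n : ℝ) := by exact_mod_cast hn5
    have hnR1 : (⌈((L : ℝ) + 1) / R⌉₊ : ℝ) ≤ (n : ℝ) := by
      have : ⌈((L : ℝ) + 1) / R⌉₊ ≤ n := by omega
      exact_mod_cast this
    have hnR2 : (⌈(3 : ℝ) / (1 - R)⌉₊ : ℝ) ≤ (n : ℝ) := by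
      have : ⌈(3 : ℝ) / (1 - R)⌉₊ ≤ n := by omega
      exact_mod_cast this
    have hRn : (L : ℝ) + 1 ≤ R * n := by
      have h1 : ((L : ℝ) + 1) / R ≤ (n : ℝ) := le_trans (Nat.le_ceil _) hnR1
      rw [div_le_iff₀ hR0] at h1
      linarith [h1]
    have h1Rn : (3 : ℝ) ≤ (1 - R) * n := by
      have h1 : (3 : ℝ) / (1 - R) ≤ (n : ℝ) := le_trans (Nat.le_ceil _) hnR2
      rw [div_le_iff₀ (by linarith : (0:ℝ) < 1 - R)] at h1
      linarith [h1]
    -- key quantities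
    set x : ℝ := (q : ℝ) ^ (R * (n : ℝ)) with hxdef
    have hkRn1 : (1 : ℝ) ≤ (k : ℝ) * (R * n) := by
      have hk1R : (1 : ℝ) ≤ (k : ℝ) := by exact_mod_cast hk1
      have h2 : (1 : ℝ) ≤ R * n := by linarith
      have h4 : R * (n : ℝ) ≤ (k : ℝ) * (R * n) := le_mul_of_one_le_left (by linarith) hk1R
      linarith
    have hx_eq : x = (2 : ℝ) ^ ((k : ℝ) * (R * n)) := by
      rw [hxdef, hqr, ← Real.rpow_mul (by norm_num : (0:ℝ) ≤ 2)]
    have hx2 : (2 : ℝ) ≤ x := by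
      rw [hx_eq]
      calc (2 : ℝ) = 2 ^ (1 : ℝ) := (Real.rpow_one 2).symm
        _ ≤ 2 ^ ((k : ℝ) * (R * n)) := Real.rpow_le_rpow_of_exponent_le one_le_two hkRn1
    have hx2L : 2 * ((L : ℝ) + 1) ≤ x := by
      have hstep : ((2 : ℝ)) ^ (L + 1 : ℕ) ≤ x := by
        rw [hx_eq, ← Real.rpow_natCast 2 (L + 1)]
        apply Real.rpow_le_rpow_of_exponent_le one_le_two
        have hk1R : (1 : ℝ) ≤ (k : ℝ) := by exact_mod_cast hk1
        have h4 : R * (n : ℝ) ≤ (k : ℝ) * (R * n) := le_mul_of_one_le_left (by linarith) hk1R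
        push_cast
        linarith
      have hnat : 2 * (L + 1) ≤ 2 ^ (L + 1) := by
        have h : L < 2 ^ L := Nat.lt_two_pow_self
        calc 2 * (L + 1) ≤ 2 * 2 ^ L := by omega
          _ = 2 ^ (L + 1) := by rw [pow_succ]; ring
      have hnatR : 2 * ((L : ℝ) + 1) ≤ (2 : ℝ) ^ (L + 1 : ℕ) := by
        have : ((2 * (L + 1) : ℕ) : ℝ) ≤ ((2 ^ (L + 1) : ℕ) : ℝ) := by exact_mod_cast hnat
        push_cast at this
        linarith
      linarith
    clear_value x
    set K : ℕ := ⌈x / 2⌉₊ with hKdef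
    have hx20 : 0 ≤ x / 2 := by linarith
    have hK1 : 1 ≤ K := Nat.one_le_iff_ne_zero.2 (by
      intro h
      rw [hKdef] at h
      have := Nat.ceil_eq_zero.1 h
      linarith)
    have hKge : x / 2 ≤ (K : ℝ) := Nat.le_ceil _
    have hKle : (K : ℝ) ≤ x := by
      have := Nat.ceil_lt_add_one hx20
      rw [← hKdef] at this
      linarith
    clear_value K
    have hML : L + 1 ≤ 2 * K := by
      have hr : ((L : ℝ) + 1) ≤ ((2 * K : ℕ) : ℝ) := by push_cast; linarith
      exact_mod_cast hr
    set e : ℕ := ⌊p * (n : ℝ)⌋₊ with hedef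
    have hpn0 : 0 ≤ p * (n : ℝ) := mul_nonneg hp0 (Nat.cast_nonneg n)
    have he_le : (e : ℝ) ≤ p * n := Nat.floor_le hpn0
    clear_value e
    have hqn_eq : ((q ^ n : ℕ) : ℝ) = (2 : ℝ) ^ ((k : ℝ) * (n : ℝ)) := by
      have h1 : ((q ^ n : ℕ) : ℝ) = (2 : ℝ) ^ (k * n : ℕ) := by
        rw [hqdef, ← pow_mul]
        push_cast
        ring
      rw [h1, ← Real.rpow_natCast 2 (k * n)]
      congr 1
      push_cast
      ring
    -- hII
    have hII : 8 * K ≤ q ^ n := by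
      have hk1R : (1 : ℝ) ≤ (k : ℝ) := by exact_mod_cast hk1
      have hexp : (3 : ℝ) + (k : ℝ) * (R * n) ≤ (k : ℝ) * n := by
        have hstep : (1 - R) * (n : ℝ) ≤ (k : ℝ) * ((1 - R) * n) :=
          le_mul_of_one_le_left (by linarith) hk1R
        have hring : (k : ℝ) * ((1 - R) * n) = (k : ℝ) * n - (k : ℝ) * (R * n) := by ring
        linarith
      have hmono := Real.rpow_le_rpow_of_exponent_le one_le_two hexp
      have h23 : (2 : ℝ) ^ ((3 : ℝ) + (k : ℝ) * (R * n)) = 8 * x := by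
        rw [Real.rpow_add (by norm_num : (0:ℝ) < 2), hx_eq]
        congr 1
        rw [show (3 : ℝ) = ((3 : ℕ) : ℝ) by norm_num, Real.rpow_natCast]
        norm_num
      rw [h23, ← hqn_eq] at hmono
      have hr : ((8 * K : ℕ) : ℝ) ≤ ((q ^ n : ℕ) : ℝ) := by
        push_cast
        push_cast at hmono
        linarith
      exact_mod_cast hr
    -- hI
    have hk1R : (1 : ℝ) ≤ (k : ℝ) := by exact_mod_cast hk1
    have hk0R : (0 : ℝ) ≤ (k : ℝ) := by linarith
    set a : ℝ := (k : ℝ) * (R * n) with hadef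
    clear_value a
    have powr : ∀ (b : ℝ) (m : ℕ), ((2 : ℝ) ^ b) ^ m = (2 : ℝ) ^ (b * m) := by
      intro b m
      rw [← Real.rpow_natCast ((2 : ℝ) ^ b) m, ← Real.rpow_mul (by norm_num : (0:ℝ) ≤ 2)]
    have F2 : ((2 * K : ℕ) : ℝ) ≤ (2 : ℝ) ^ ((1 : ℝ) + a) := by
      rw [Real.rpow_add (by norm_num : (0:ℝ) < 2), Real.rpow_one, ← hx_eq]
      push_cast
      linarith
    have F3 : ((2 ^ n * q ^ e : ℕ) : ℝ) = (2 : ℝ) ^ ((n : ℝ) + (k : ℝ) * e) := by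
      have h1 : (2 ^ n * q ^ e : ℕ) = 2 ^ (n + k * e) := by
        rw [hqdef, ← pow_mul, ← pow_add]
      rw [h1]
      push_cast
      rw [← Real.rpow_natCast 2 (n + k * e)]
      congr 1
      push_cast
      ring
    have hKlow : (2 : ℝ) ^ (a - 1) ≤ (K : ℝ) := by
      rw [Real.rpow_sub (by norm_num : (0:ℝ) < 2), Real.rpow_one, ← hx_eq]
      linarith
    have hEXP : (1 : ℝ) + ((1 + a) * (L + 1)) + (((n : ℝ) + (k : ℝ) * e) * (L + 1))
        ≤ (a - 1) + (k : ℝ) * n * L := by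
      have hδe : (k : ℝ) * e * ((L : ℝ) + 1) ≤ (k : ℝ) * (n : ℝ) * ((L : ℝ) * δ) := by
        have h1 : (k : ℝ) * e ≤ (k : ℝ) * (p * n) :=
          mul_le_mul_of_nonneg_left he_le hk0R
        have h2 : (k : ℝ) * e * ((L : ℝ) + 1) ≤ (k : ℝ) * (p * n) * ((L : ℝ) + 1) :=
          mul_le_mul_of_nonneg_right h1 (by linarith)
        have h3 : (k : ℝ) * (p * n) * ((L : ℝ) + 1) = (k : ℝ) * (n : ℝ) * (p * ((L : ℝ) + 1)) := by
          ring
        rw [h3, hpid] at h2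
        exact h2
      have key2 : (L : ℝ) + 3 + (n : ℝ) * ((L : ℝ) + 1) ≤ 3 * ((n : ℝ) * (L : ℝ)) := by
        have h5 : (5 : ℝ) * (2 * (L : ℝ) - 1) ≤ (n : ℝ) * (2 * (L : ℝ) - 1) :=
          mul_le_mul_of_nonneg_right hn5R (by linarith)
        have hr1 : (n : ℝ) * (2 * (L : ℝ) - 1) = 2 * ((n : ℝ) * (L : ℝ)) - n := by ring
        linarith
      have key3 : 3 * ((n : ℝ) * (L : ℝ)) ≤ ε * (k : ℝ) * ((n : ℝ) * (L : ℝ)) := by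
        have hnL : (0 : ℝ) ≤ (n : ℝ) * (L : ℝ) := by positivity
        have := mul_le_mul_of_nonneg_right hεk hnL
        linarith
      rw [hδdef] at hδe
      rw [hadef]
      have hexpand : (k : ℝ) * (n : ℝ) * ((L : ℝ) * (1 - R - ε))
          = (k : ℝ) * n * L - (k : ℝ) * (R * n) * L - ε * (k : ℝ) * ((n : ℝ) * (L : ℝ)) := by
        ring
      rw [hexpand] at hδe
      linarith [hδe, key2, key3]
    have hIreal : (2 : ℝ) * ((2 * K : ℕ) : ℝ) ^ (L + 1) * ((2 ^ n * q ^ e : ℕ) : ℝ) ^ (L + 1)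
        ≤ (K : ℝ) * ((q ^ n : ℕ) : ℝ) ^ L := by
      have t1 : ((2 * K : ℕ) : ℝ) ^ (L + 1) ≤ ((2 : ℝ) ^ ((1 : ℝ) + a)) ^ (L + 1) :=
        pow_le_pow_left₀ (by positivity) F2 _
      have hQL : ((q ^ n : ℕ) : ℝ) ^ L = (2 : ℝ) ^ ((k : ℝ) * n * L) := by
        rw [hqn_eq, powr]
      calc (2 : ℝ) * ((2 * K : ℕ) : ℝ) ^ (L + 1) * ((2 ^ n * q ^ e : ℕ) : ℝ) ^ (L + 1)
          ≤ (2 : ℝ) * ((2 : ℝ) ^ ((1 : ℝ) + a)) ^ (L + 1)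
              * ((2 : ℝ) ^ ((n : ℝ) + (k : ℝ) * e)) ^ (L + 1) := by
            rw [F3]
            exact mul_le_mul_of_nonneg_right
              (mul_le_mul_of_nonneg_left t1 (by norm_num)) (by positivity)
        _ = (2 : ℝ) ^ ((1 : ℝ) + ((1 + a) * (L + 1)) + (((n : ℝ) + (k : ℝ) * e) * (L + 1))) := by
            rw [powr, powr]
            rw [show ((1 : ℝ) + ((1 + a) * (L + 1)) + (((n : ℝ) + (k : ℝ) * e) * (L + 1)))
              = (1 : ℝ) + ((1 + a) * ((L : ℕ) + 1 : ℕ)) + (((n : ℝ) + (k : ℝ) * e) * ((L : ℕ) + 1 : ℕ))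
              from by push_cast; ring]
            rw [Real.rpow_add (by norm_num : (0:ℝ) < 2), Real.rpow_add (by norm_num : (0:ℝ) < 2),
              Real.rpow_one]
        _ ≤ (2 : ℝ) ^ ((a - 1) + (k : ℝ) * n * L) :=
            Real.rpow_le_rpow_of_exponent_le one_le_two hEXP
        _ = (2 : ℝ) ^ (a - 1) * (2 : ℝ) ^ ((k : ℝ) * n * L) :=
            Real.rpow_add (by norm_num : (0:ℝ) < 2) _ _
        _ ≤ (K : ℝ) * ((q ^ n : ℕ) : ℝ) ^ L := by
            rw [hQL]
            exact mul_le_mul_of_nonneg_right hKlow (by positivity)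
    have hI : 2 * (2 * K) ^ (L + 1) * (2 ^ n * q ^ e) ^ (L + 1) ≤ K * (q ^ n) ^ L := by
      exact_mod_cast hIreal
    obtain ⟨C, hCcard, hCld⟩ := code_exists n q L e K hq0 hK1 hML
      (fun y => ball_card_le n q e hq0 y) hI hII
    refine ⟨q, hq2, hqle, C, ?_, ?_⟩
    · calc (q : ℝ) ^ (R * (n : ℝ)) / 2 = x / 2 := by rw [hxdef]
        _ ≤ (K : ℝ) := hKge
        _ ≤ (C.card : ℝ) := by exact_mod_cast hCcard
    · intro y
      have hfe : (C.filter fun c => ((hammingDist y c : ℕ) : ℝ) ≤ p * n)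
          = C.filter (fun c => hammingDist y c ≤ e) := by
        apply Finset.filter_congr
        intro c _
        rw [hedef]
        exact (Nat.le_floor_iff hpn0).symm
      rw [hfe]
      exact hCld y
  · -- degenerate case
    refine ⟨0, fun n _ => ⟨q, hq2, hqle, Finset.univ, ?_, ?_⟩⟩
    · have hcard : ((Finset.univ : Finset (Fin n → Fin q)).card : ℝ) = ((q ^ n : ℕ) : ℝ) := by
        rw [Finset.card_univ]
        congr 1
        simp
      have hqn : ((q ^ n : ℕ) : ℝ) = (q : ℝ) ^ ((n : ℕ) : ℝ) := by
        push_cast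
        rw [Real.rpow_natCast]
      have hq1R : (1 : ℝ) ≤ (q : ℝ) := by
        have : (1 : ℕ) ≤ q := by omega
        exact_mod_cast this
      have hmono : (q : ℝ) ^ (R * (n : ℝ)) ≤ (q : ℝ) ^ ((n : ℕ) : ℝ) := by
        apply Real.rpow_le_rpow_of_exponent_le hq1R
        have h0 : (0 : ℝ) ≤ (1 - R) * (n : ℝ) := mul_nonneg (by linarith) (Nat.cast_nonneg n)
        linarith
      have hx0 : (0 : ℝ) ≤ (q : ℝ) ^ (R * (n : ℝ)) := Real.rpow_nonneg (by positivity) _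
      rw [hcard, hqn]
      linarith
    · intro y
      have hp0' : p * (n : ℝ) ≤ 0 := by
        have hple : p ≤ 0 := by
          rw [hpdef]
          apply mul_nonpos_of_nonneg_of_nonpos hLfrac0
          linarith [not_lt.1 hRε]
        have := mul_le_mul_of_nonneg_right hple (Nat.cast_nonneg (α := ℝ) n)
        linarith [this]
      have hsub : (Finset.univ.filter
            fun c : Fin n → Fin q => ((hammingDist y c : ℕ) : ℝ) ≤ p * n) ⊆ {y} := by
        intro c hc
        have hd := (Finset.mem_filter.1 hc).2
        have h0 : (hammingDist y c : ℝ) = 0 :=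
          le_antisymm (le_trans hd hp0') (Nat.cast_nonneg _)
        have h0' : hammingDist y c = 0 := by exact_mod_cast h0
        have : y = c := hammingDist_eq_zero.1 h0'
        rw [Finset.mem_singleton, ← this]
      calc ((Finset.univ : Finset (Fin n → Fin q)).filter
            fun c => ((hammingDist y c : ℕ) : ℝ) ≤ p * n).card
          ≤ ({y} : Finset (Fin n → Fin q)).card := Finset.card_le_card hsub
        _ = 1 := Finset.card_singleton y
        _ ≤ L := hL
end

section
/- Let C ⊆ Σ^n be a code over a finite alphabet Σ of size q, let L ≥ 1 and let k be an integer with 0 ≤ k ≤ n. If |C| > L·q^k, then there exist L+1 pairwise distinct codewords c⁽⁰⁾, c⁽¹⁾, …, c⁽ᴸ⁾ ∈ C and a word y ∈ Σ^n such that d(y, c⁽ⁱ⁾) ≤ n − k − ⌊(n−k)/(L+1)⌋ for every i ∈ {0,1,…,L}. In particular, C is not (p, L)-list-decodable for any p with p·n ≥ n − k − ⌊(n−k)/(L+1)⌋. -/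
theorem stmt_11 {n : ℕ} {A : Type} [Fintype A] [DecidableEq A] (q : ℕ)
    (hq : Fintype.card A = q) (C : Finset (Fin n → A)) (L k : ℕ)
    (hL : 1 ≤ L) (hk : k ≤ n) (hC : L * q ^ k < C.card) :
    (∃ (f : Fin (L + 1) → (Fin n → A)) (y : Fin n → A),
      Function.Injective f ∧ (∀ i, f i ∈ C) ∧
      ∀ i, hammingDist y (f i) ≤ n - k - (n - k) / (L + 1)) ∧
    ∀ p : ℝ, ((n - k - (n - k) / (L + 1) : ℕ) : ℝ) ≤ p * n → ¬ ListDecodable C p L := by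
  classical
  obtain ⟨m, hm⟩ : ∃ m, (n - k) / (L + 1) = m := ⟨_, rfl⟩
  have hmle : (L + 1) * m ≤ n - k := by
    rw [← hm, mul_comm]; exact Nat.div_mul_le_self _ _
  -- Pigeonhole on the projection to the first k coordinates
  have hmaps : ∀ c ∈ C,
      (fun j : Fin k => c (Fin.castLE hk j)) ∈ (Finset.univ : Finset (Fin k → A)) := by
    intro c _; exact Finset.mem_univ _
  have hcard : (Finset.univ : Finset (Fin k → A)).card * L < C.card := by
    rwa [Finset.card_univ, Fintype.card_fun, hq, Fintype.card_fin, mul_comm]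
  obtain ⟨v, -, hv⟩ := Finset.exists_lt_card_fiber_of_mul_lt_card_of_maps_to hmaps hcard
  set S := C.filter (fun c => (fun j : Fin k => c (Fin.castLE hk j)) = v) with hSdef
  obtain ⟨S', hS'sub, hS'card⟩ := Finset.exists_subset_card_eq (by omega : L + 1 ≤ S.card)
  set f : Fin (L + 1) → (Fin n → A) :=
    fun i => (S'.equivFin.symm (Fin.cast hS'card.symm i) : (Fin n → A)) with hfdef
  have hfinj : Function.Injective f := by
    intro a b hab
    have := S'.equivFin.symm.injective (Subtype.val_injective hab)
    simpa [Fin.ext_iff] using congrArg Fin.val this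
  have hfS' : ∀ i, f i ∈ S' := fun i => (S'.equivFin.symm (Fin.cast hS'card.symm i)).2
  have hfC : ∀ i, f i ∈ C := fun i => (Finset.mem_filter.mp (hS'sub (hfS' i))).1
  have hfv : ∀ i, (fun j : Fin k => f i (Fin.castLE hk j)) = v :=
    fun i => (Finset.mem_filter.mp (hS'sub (hfS' i))).2
  -- agreement on the first k coordinates
  have hagree : ∀ (i i' : Fin (L + 1)) (j : Fin n), j.val < k → f i j = f i' j := by
    intro i i' j hj
    have h1 := congrFun (hfv i) ⟨j.val, hj⟩
    have h2 := congrFun (hfv i') ⟨j.val, hj⟩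
    have hc : Fin.castLE hk (⟨j.val, hj⟩ : Fin k) = j := rfl
    rw [hc] at h1 h2
    rw [h1, h2]
  -- the index of the block containing coordinate j
  set idx : Fin n → Fin (L + 1) :=
    fun j => ⟨min L ((j.val - k) / m), Nat.lt_succ_of_le (min_le_left _ _)⟩ with hidx
  set y : Fin n → A := fun j => f (idx j) j with hy
  have hdist : ∀ i, hammingDist y (f i) ≤ n - k - m := by
    intro i
    have hle : k + (i.val + 1) * m ≤ n := by
      have h1 : (i.val + 1) * m ≤ (L + 1) * m :=
        Nat.mul_le_mul_right _ (by omega)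
      omega
    have hsm : (i.val + 1) * m = i.val * m + m := by ring
    -- the possible disagreement set
    set E : Finset (Fin n) := Finset.univ.filter
      (fun j : Fin n => k ≤ j.val ∧ (j.val < k + i.val * m ∨ k + (i.val + 1) * m ≤ j.val))
      with hE
    have hsub : (Finset.univ.filter fun j => y j ≠ f i j) ⊆ E := by
      intro j hj
      rw [Finset.mem_filter] at hj
      rw [hE, Finset.mem_filter]
      refine ⟨Finset.mem_univ _, ?_⟩
      by_contra hcon
      push_neg at hcon
      apply hj.2
      by_cases hjk : j.val < k
      · exact hagree _ _ j hjk
      · have h1 : k + i.val * m ≤ j.val := (hcon (by omega)).1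
        have h2 : j.val < k + (i.val + 1) * m := by
          by_contra h2
          exact absurd (hcon (by omega)).2 (by omega)
        have hm0 : 0 < m := by omega
        have hdiv : (j.val - k) / m = i.val :=
          Nat.div_eq_of_lt_le (by omega) (by omega)
        have hidxj : idx j = i := by
          rw [hidx]
          ext
          simp only [hdiv]
          exact Nat.min_eq_right (by omega)
        rw [hy]
        simp only [hidxj]
    calc hammingDist y (f i) ≤ E.card := Finset.card_le_card hsub
      _ ≤ n - k - m := by
          have hcardE : E.card = ((Finset.range n).filter
              (fun j => k ≤ j ∧ (j < k + i.val * m ∨ k + (i.val + 1) * m ≤ j))).card := by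
            apply Finset.card_bij (fun j _ => j.val)
            · intro a ha
              rw [hE, Finset.mem_filter] at ha
              simp only [Finset.mem_filter, Finset.mem_range]
              exact ⟨a.isLt, ha.2⟩
            · intro a _ b _ hab
              exact Fin.ext hab
            · intro b hb
              simp only [Finset.mem_filter, Finset.mem_range] at hb
              refine ⟨⟨b, hb.1⟩, ?_, rfl⟩
              rw [hE, Finset.mem_filter]
              exact ⟨Finset.mem_univ _, hb.2⟩
          rw [hcardE]
          have hset : (Finset.range n).filter
              (fun j => k ≤ j ∧ (j < k + i.val * m ∨ k + (i.val + 1) * m ≤ j))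
              = Finset.Ico k (k + i.val * m) ∪ Finset.Ico (k + (i.val + 1) * m) n := by
            ext j
            simp only [Finset.mem_filter, Finset.mem_range, Finset.mem_union, Finset.mem_Ico]
            omega
          rw [hset, Finset.card_union_of_disjoint, Nat.card_Ico, Nat.card_Ico]
          · omega
          · rw [Finset.disjoint_left]
            intro a ha ha'
            rw [Finset.mem_Ico] at ha ha'
            omega
    -- end hdist
  have hmain : ∃ (f : Fin (L + 1) → (Fin n → A)) (y : Fin n → A),
      Function.Injective f ∧ (∀ i, f i ∈ C) ∧
      ∀ i, hammingDist y (f i) ≤ n - k - (n - k) / (L + 1) := by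
    exact ⟨f, y, hfinj, hfC, fun i => by rw [hm]; exact hdist i⟩
  refine ⟨hmain, ?_⟩
  intro p hp hLD
  have hball := hLD y
  have himg : Finset.image f Finset.univ ⊆
      C.filter (fun c => (hammingDist y c : ℝ) ≤ p * n) := by
    intro c hc
    rw [Finset.mem_image] at hc
    obtain ⟨i, -, rfl⟩ := hc
    rw [Finset.mem_filter]
    refine ⟨hfC i, ?_⟩
    calc (hammingDist y (f i) : ℝ) ≤ ((n - k - m : ℕ) : ℝ) := Nat.cast_le.mpr (hdist i)
      _ ≤ p * n := by rw [← hm]; exact hp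
  have hcard2 : L + 1 ≤ (C.filter (fun c => (hammingDist y c : ℝ) ≤ p * n)).card := by
    calc L + 1 = (Finset.image f Finset.univ).card := by
          rw [Finset.card_image_of_injective _ hfinj, Finset.card_univ, Fintype.card_fin]
      _ ≤ _ := Finset.card_le_card himg
  omega
end

section
/- Let p ∈ (0,1), let L ≥ 1 and n ≥ 1 be integers, and let M be an integer with M ≥ L²/p (so in particular M ≥ L). Let S₁, …, S_M be subsets of {1,…,n}, each of size at least p·n. Then there exist indices 1 ≤ j₁ < j₂ < ⋯ < j_L ≤ M such that |S_{j₁} ∩ S_{j₂} ∩ ⋯ ∩ S_{j_L}| ≥ (p^L/2)·n. -/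
open Finset

/-- Convexity of products of nonneg affine functions at a point `θ ∈ [0,1]`. -/
lemma aux17_convex {ι : Type*} (s : Finset ι) (c : ι → ℝ) (hc : ∀ i ∈ s, 0 ≤ c i)
    (θ : ℝ) (h0 : 0 ≤ θ) (h1 : θ ≤ 1) :
    ∏ i ∈ s, (c i + θ) ≤ (1 - θ) * ∏ i ∈ s, c i + θ * ∏ i ∈ s, (c i + 1) := by
  induction s using Finset.cons_induction with
  | empty => simp
  | cons a s ha ih =>
    have hca : 0 ≤ c a := hc a (mem_cons_self a s)
    have hc' : ∀ i ∈ s, 0 ≤ c i := fun i hi => hc i (mem_cons.2 (Or.inr hi))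
    have hA0 : 0 ≤ ∏ i ∈ s, c i := prod_nonneg hc'
    have hAB : ∏ i ∈ s, c i ≤ ∏ i ∈ s, (c i + 1) :=
      prod_le_prod hc' (fun i hi => by linarith)
    have hP0 : 0 ≤ ∏ i ∈ s, (c i + θ) := prod_nonneg (fun i hi => by linarith [hc' i hi])
    have hP := ih hc'
    rw [prod_cons, prod_cons, prod_cons]
    have h2 : (c a + θ) * ∏ i ∈ s, (c i + θ)
        ≤ (c a + θ) * ((1 - θ) * ∏ i ∈ s, c i + θ * ∏ i ∈ s, (c i + 1)) :=
      mul_le_mul_of_nonneg_left hP (by linarith)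
    nlinarith [mul_nonneg (mul_nonneg h0 (by linarith : (0:ℝ) ≤ 1 - θ))
      (sub_nonneg.2 hAB)]

/-- Lower bound for the falling-factorial product. -/
lemma aux17_lower (L : ℕ) : ∀ t : ℝ, (L : ℝ) ≤ t →
    t ^ (L + 1) - (∑ i ∈ range L, (i : ℝ)) * t ^ L ≤ t * ∏ i ∈ range L, (t - i) := by
  induction L with
  | zero => intro t ht; simpa using ht
  | succ k ih =>
    intro t ht
    have hk : ((k : ℝ)) ≤ t := by push_cast at ht ⊢; linarith
    have h0 : (0 : ℝ) ≤ t := le_trans (by positivity) hk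
    have H := ih t hk
    have hfac : 0 ≤ t - k := by push_cast at ht; linarith
    have hσ : 0 ≤ ∑ i ∈ range k, (i : ℝ) := sum_nonneg fun i _ => by positivity
    rw [prod_range_succ, sum_range_succ]
    have H2 : (t ^ (k + 1) - (∑ i ∈ range k, (i : ℝ)) * t ^ k) * (t - k)
        ≤ (t * ∏ i ∈ range k, (t - i)) * (t - k) :=
      mul_le_mul_of_nonneg_right H hfac
    have hpk : (0:ℝ) ≤ t ^ k := pow_nonneg h0 k
    have e1 : t ^ (k + 1 + 1) = t ^ (k + 1) * t := by ring
    have e2 : t ^ (k + 1) = t ^ k * t := by ring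
    nlinarith [mul_nonneg (mul_nonneg hσ (by exact Nat.cast_nonneg k)) hpk]

lemma aux17_line_up (l m : ℕ) : ∀ a : ℕ,
    m.choose (l + 1) + a * m.choose l ≤ (m + a).choose (l + 1) := by
  intro a; induction a with
  | zero => simp
  | succ a ih =>
    have h1 : m.choose l ≤ (m + a).choose l := Nat.choose_le_choose l (Nat.le_add_right m a)
    have h2 : (m + (a + 1)).choose (l + 1) = (m + a).choose l + (m + a).choose (l + 1) := by
      rw [show m + (a + 1) = (m + a) + 1 from rfl, Nat.choose_succ_succ]
    have h4 : (a + 1) * m.choose l = a * m.choose l + m.choose l := by ring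
    omega

lemma aux17_line_down (l m : ℕ) : ∀ a : ℕ, a ≤ m →
    m.choose (l + 1) ≤ (m - a).choose (l + 1) + a * m.choose l := by
  intro a; induction a with
  | zero => simp
  | succ a ih =>
    intro ha
    have ih' := ih (by omega)
    have hm : m - a = (m - (a + 1)) + 1 := by omega
    have h2 : (m - a).choose (l + 1) = (m - (a + 1)).choose l + (m - (a + 1)).choose (l + 1) := by
      rw [hm, Nat.choose_succ_succ]
    have h3 : (m - (a + 1)).choose l ≤ m.choose l := Nat.choose_le_choose l (by omega)
    have h4 : (a + 1) * m.choose l = a * m.choose l + m.choose l := by ring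
    omega

/-- Supporting line for the binomial coefficient, real version. -/
lemma aux17_line (l m d : ℕ) :
    (m.choose (l + 1) : ℝ) + ((d : ℝ) - m) * m.choose l ≤ (d.choose (l + 1) : ℝ) := by
  rcases le_total m d with h | h
  · obtain ⟨a, rfl⟩ := Nat.exists_eq_add_of_le h
    have key := aux17_line_up l m a
    have e : ((m + a : ℕ) : ℝ) - (m : ℝ) = (a : ℝ) := by push_cast; ring
    rw [e]
    exact_mod_cast key
  · have key := aux17_line_down l m (m - d) (by omega)
    have hmd : m - (m - d) = d := by omega
    rw [hmd] at key
    have h1 : ((m.choose (l + 1) : ℕ) : ℝ)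
        ≤ (d.choose (l + 1) : ℝ) + ((m - d : ℕ) : ℝ) * (m.choose l : ℝ) := by
      exact_mod_cast key
    rw [Nat.cast_sub h] at h1
    linarith [h1, (by ring : ((d : ℝ) - m) * (m.choose l : ℝ)
      + ((m : ℝ) - d) * (m.choose l : ℝ) = 0)]

lemma aux17_sum (L : ℕ) : (∑ i ∈ range L, (i : ℝ)) = (L : ℝ) * ((L : ℝ) - 1) / 2 := by
  induction L with
  | zero => simp
  | succ k ihk =>
    rw [sum_range_succ, ihk]
    push_cast; ring

lemma aux17_sum_le (L : ℕ) : (∑ i ∈ range L, (i : ℝ)) ≤ (L : ℝ) ^ 2 / 2 := by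
  rw [aux17_sum]
  nlinarith [(Nat.cast_nonneg L : (0:ℝ) ≤ (L:ℝ))]

/-- Cast of the falling factorial product. -/
lemma aux17_prod_cast (L m : ℕ) (h : L ≤ m + 1) :
    ∏ i ∈ range L, ((m : ℝ) - i) = (m.descFactorial L : ℝ) := by
  rw [Nat.descFactorial_eq_prod_range, Nat.cast_prod]
  refine prod_congr rfl fun i hi => ?_
  have : i ≤ m := by have := mem_range.1 hi; omega
  rw [Nat.cast_sub this]

theorem stmt_17 (p : ℝ) (hp0 : 0 < p) (hp1 : p < 1) (L n M : ℕ)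
    (hL : 1 ≤ L) (hn : 1 ≤ n) (hM : (L : ℝ) ^ 2 / p ≤ (M : ℝ))
    (S : Fin M → Finset (Fin n)) (hS : ∀ j, p * n ≤ ((S j).card : ℝ)) :
    ∃ J : Finset (Fin M), J.card = L ∧ (p ^ L / 2) * n ≤ ((J.inf S).card : ℝ) := by
  classical
  obtain ⟨l, rfl⟩ : ∃ l, L = l + 1 := ⟨L - 1, by omega⟩
  set L := l + 1 with hLdef
  -- basic facts
  have hpM : (L : ℝ) ^ 2 ≤ p * M := by
    rw [div_le_iff₀ hp0] at hM; linarith [hM]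
  have hL2 : (L : ℝ) ≤ (L : ℝ) ^ 2 := by
    have : (1 : ℝ) ≤ (L : ℝ) := by exact_mod_cast hL
    nlinarith
  have hL1 : (1 : ℝ) ≤ (L : ℝ) := by exact_mod_cast hL
  have hpMpos : (0 : ℝ) < p * M := lt_of_lt_of_le (by nlinarith) hpM
  have hMpos : 0 < (M : ℝ) := by
    rcases lt_or_ge 0 (M : ℝ) with h | h
    · exact h
    · exfalso
      have := mul_le_mul_of_nonneg_left h hp0.le
      simp only [mul_zero] at this
      linarith
  have hLM : (L : ℝ) ≤ (M : ℝ) := by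
    nlinarith [mul_nonneg (by linarith : (0:ℝ) ≤ 1 - p) hMpos.le]
  have hLMn : L ≤ M := by exact_mod_cast hLM
  set t : ℝ := p * M with htdef
  have ht0 : 0 < t := by positivity
  set m : ℕ := ⌊t⌋₊ with hmdef
  have hmt : (m : ℝ) ≤ t := Nat.floor_le ht0.le
  have htm1 : t < m + 1 := Nat.lt_floor_add_one t
  set θ : ℝ := t - m with hθdef
  have hθ0 : 0 ≤ θ := by simp only [hθdef]; linarith
  have hθ1 : θ ≤ 1 := by simp only [hθdef]; linarith
  have hLm : L ≤ m := by
    have : (L : ℝ) ≤ t := le_trans hL2 hpM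
    exact Nat.le_floor this
  have hLmR : (L : ℝ) ≤ (m : ℝ) := by exact_mod_cast hLm
  -- degree counts
  set T : Fin n → Finset (Fin M) := fun x => univ.filter (fun j => x ∈ S j) with hTdef
  set d : Fin n → ℕ := fun x => (T x).card with hddef
  -- double counting of the total degree
  have hcount1 : ∑ x : Fin n, (d x : ℝ) = ∑ j : Fin M, ((S j).card : ℝ) := by
    have : ∑ x : Fin n, d x = ∑ j : Fin M, (S j).card := by
      have e1 : ∀ x : Fin n, d x = ∑ j : Fin M, if x ∈ S j then 1 else 0 := by
        intro x; rw [hddef]; simp only [hTdef]; rw [card_filter]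
      have e2 : ∀ j : Fin M, (S j).card = ∑ x : Fin n, if x ∈ S j then 1 else 0 := by
        intro j
        rw [← card_filter]
        congr 1
        ext x; simp
      simp only [e1, e2]
      exact Finset.sum_comm
    exact_mod_cast this
  have hdeg : t * n ≤ ∑ x : Fin n, (d x : ℝ) := by
    rw [hcount1]
    have h := Finset.card_nsmul_le_sum univ (fun j : Fin M => ((S j).card : ℝ)) (p * n)
      (fun j _ => hS j)
    simp only [card_univ, Fintype.card_fin, nsmul_eq_mul] at h
    calc t * n = (M : ℝ) * (p * n) := by rw [htdef]; ring
      _ ≤ _ := h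
  -- the main double count
  set A : Finset (Finset (Fin M)) := (univ : Finset (Fin M)).powersetCard L with hAdef
  have hcount2 : ∑ J ∈ A, ((J.inf S).card) = ∑ x : Fin n, (d x).choose L := by
    have e1 : ∀ J : Finset (Fin M), (J.inf S).card
        = ∑ x : Fin n, if J ⊆ T x then 1 else 0 := by
      intro J
      rw [← card_filter]
      congr 1
      ext x
      simp only [mem_filter, mem_univ, true_and, Finset.mem_inf, hTdef]
      constructor
      · intro h
        intro j hj
        simp only [mem_filter, mem_univ, true_and]
        exact h j hj
      · intro h j hj
        have := h hj
        simpa using this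
    calc ∑ J ∈ A, ((J.inf S).card) = ∑ J ∈ A, ∑ x : Fin n, (if J ⊆ T x then 1 else 0) := by
          exact Finset.sum_congr rfl fun J _ => e1 J
      _ = ∑ x : Fin n, ∑ J ∈ A, (if J ⊆ T x then 1 else 0) := Finset.sum_comm
      _ = ∑ x : Fin n, ((T x).powersetCard L).card := by
          refine Finset.sum_congr rfl fun x _ => ?_
          rw [← card_filter]
          congr 1
          ext J
          simp only [mem_filter, hAdef, mem_powersetCard, subset_univ, true_and]
          exact and_comm
      _ = ∑ x : Fin n, (d x).choose L := by
          refine Finset.sum_congr rfl fun x _ => ?_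
          rw [card_powersetCard]
  -- supporting line lower bound
  have hline : (n : ℝ) * ((m.choose L : ℝ) + θ * (m.choose l : ℝ))
      ≤ ∑ x : Fin n, ((d x).choose L : ℝ) := by
    have h1 : ∀ x : Fin n, (m.choose L : ℝ) + ((d x : ℝ) - m) * m.choose l
        ≤ ((d x).choose L : ℝ) := fun x => aux17_line l m (d x)
    have h2 : ∑ x : Fin n, ((m.choose L : ℝ) + ((d x : ℝ) - m) * (m.choose l : ℝ))
        ≤ ∑ x : Fin n, ((d x).choose L : ℝ) := Finset.sum_le_sum fun x _ => h1 x
    have h3 : ∑ x : Fin n, ((m.choose L : ℝ) + ((d x : ℝ) - m) * (m.choose l : ℝ))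
        = (n : ℝ) * (m.choose L : ℝ)
          + ((∑ x : Fin n, (d x : ℝ)) - n * m) * (m.choose l : ℝ) := by
      rw [Finset.sum_add_distrib, Finset.sum_const]
      simp only [card_univ, Fintype.card_fin, nsmul_eq_mul]
      rw [← Finset.sum_mul, Finset.sum_sub_distrib, Finset.sum_const]
      simp only [card_univ, Fintype.card_fin, nsmul_eq_mul]
    have h4 : (n : ℝ) * (m.choose L : ℝ) + ((n : ℝ) * θ) * (m.choose l : ℝ)
        ≤ (n : ℝ) * (m.choose L : ℝ)
          + ((∑ x : Fin n, (d x : ℝ)) - n * m) * (m.choose l : ℝ) := by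
      have hnθ : (n : ℝ) * θ ≤ (∑ x : Fin n, (d x : ℝ)) - n * m := by
        have : t * n ≤ ∑ x : Fin n, (d x : ℝ) := hdeg
        simp only [hθdef]; linarith [hdeg]
      exact add_le_add_right (mul_le_mul_of_nonneg_right hnθ (Nat.cast_nonneg _)) _
    calc (n : ℝ) * ((m.choose L : ℝ) + θ * (m.choose l : ℝ))
        = (n : ℝ) * (m.choose L : ℝ) + ((n : ℝ) * θ) * (m.choose l : ℝ) := by ring
      _ ≤ _ := le_trans h4 (le_of_eq h3.symm)
      _ ≤ _ := h2
  -- key product estimate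
  have hfactpos : (0 : ℝ) < (Nat.factorial L : ℝ) := by
    exact_mod_cast Nat.factorial_pos L
  have hprod_m : ∏ i ∈ range L, ((m : ℝ) - i) = ((Nat.factorial L : ℝ)) * (m.choose L : ℝ) := by
    rw [aux17_prod_cast L m (by omega)]
    rw [Nat.descFactorial_eq_factorial_mul_choose]
    push_cast; ring
  have hprod_ml : ∏ i ∈ range l, ((m : ℝ) - i) = ((Nat.factorial l : ℝ)) * (m.choose l : ℝ) := by
    rw [aux17_prod_cast l m (by omega)]
    rw [Nat.descFactorial_eq_factorial_mul_choose]
    push_cast; ring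
  have hprod_M : ∏ i ∈ range L, ((M : ℝ) - i) = ((Nat.factorial L : ℝ)) * (M.choose L : ℝ) := by
    rw [aux17_prod_cast L M (by omega)]
    rw [Nat.descFactorial_eq_factorial_mul_choose]
    push_cast; ring
  -- convexity: ∏ (t - i) ≤ ∏ (m - i) + θ * L * ∏_{i<l} (m - i)
  have hconv : ∏ i ∈ range L, (t - (i : ℝ))
      ≤ ∏ i ∈ range L, ((m : ℝ) - i) + θ * L * ∏ i ∈ range l, ((m : ℝ) - i) := by
    have hc : ∀ i ∈ range L, (0 : ℝ) ≤ (m : ℝ) - i := by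
      intro i hi
      have : (i : ℝ) < L := by exact_mod_cast mem_range.1 hi
      linarith
    have key := aux17_convex (range L) (fun i => (m : ℝ) - i) hc θ hθ0 hθ1
    have e0 : ∏ i ∈ range L, (t - (i : ℝ)) = ∏ i ∈ range L, (((m : ℝ) - i) + θ) := by
      refine prod_congr rfl fun i _ => ?_
      rw [hθdef]; ring
    have e1 : ∏ i ∈ range L, (((m : ℝ) - i) + 1) = ((m : ℝ) + 1) * ∏ i ∈ range l, ((m : ℝ) - i) := by
      rw [prod_range_succ']
      have : ∀ i ∈ range l, ((m : ℝ) - (i + 1 : ℕ) + 1) = (m : ℝ) - i := by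
        intro i _; push_cast; ring
      rw [prod_congr rfl this]
      push_cast
      ring
    have e2 : ∏ i ∈ range L, ((m : ℝ) - i) = ((m : ℝ) - l) * ∏ i ∈ range l, ((m : ℝ) - i) := by
      rw [prod_range_succ]; ring
    rw [e0]
    refine le_trans key ?_
    rw [e1, e2]
    have hPl : (0 : ℝ) ≤ ∏ i ∈ range l, ((m : ℝ) - i) := by
      refine prod_nonneg fun i hi => ?_
      have h1 : (i : ℝ) < (l : ℝ) := by exact_mod_cast mem_range.1 hi
      have h2 : (l : ℝ) ≤ (m : ℝ) := by exact_mod_cast (by omega : l ≤ m)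
      linarith
    have : (1 - θ) * (((m : ℝ) - l) * ∏ i ∈ range l, ((m : ℝ) - i))
        + θ * (((m : ℝ) + 1) * ∏ i ∈ range l, ((m : ℝ) - i))
        = ((m : ℝ) - l) * ∏ i ∈ range l, ((m : ℝ) - i)
          + θ * (L : ℝ) * ∏ i ∈ range l, ((m : ℝ) - i) := by
      have : ((L : ℝ)) = (l : ℝ) + 1 := by push_cast [hLdef]; ring
      rw [this]; ring
    linarith [le_of_eq this]
  -- lower bound on ∏ (t - i)
  have hlow : t ^ L / 2 ≤ ∏ i ∈ range L, (t - (i : ℝ)) := by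
    have hLt : (L : ℝ) ≤ t := le_trans hL2 hpM
    have H := aux17_lower L t hLt
    have hσ : (∑ i ∈ range L, (i : ℝ)) ≤ (L : ℝ) ^ 2 / 2 := aux17_sum_le L
    have hpow : (0 : ℝ) ≤ t ^ L := pow_nonneg ht0.le L
    have h2 : t ^ (L + 1) - ((L : ℝ) ^ 2 / 2) * t ^ L ≤ t ^ (L + 1) - (∑ i ∈ range L, (i : ℝ)) * t ^ L := by
      have := mul_le_mul_of_nonneg_right hσ hpow
      linarith
    have h3 : t * (t ^ L / 2) ≤ t ^ (L + 1) - ((L : ℝ) ^ 2 / 2) * t ^ L := by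
      have e : t ^ (L + 1) = t * t ^ L := by ring
      have h4 := mul_le_mul_of_nonneg_right hpM hpow
      rw [e]
      linarith
    have := le_trans h3 (le_trans h2 H)
    exact le_of_mul_le_mul_left this ht0
  -- combine: L! * (choose m L + θ choose m l) ≥ (p^L/2) * L! * choose M L
  have hMub : ∏ i ∈ range L, ((M : ℝ) - i) ≤ (M : ℝ) ^ L := by
    calc ∏ i ∈ range L, ((M : ℝ) - i) ≤ ∏ i ∈ range L, (M : ℝ) := by
          refine prod_le_prod (fun i hi => ?_) (fun i hi => by
            have : (0:ℝ) ≤ (i:ℝ) := Nat.cast_nonneg i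
            linarith)
          have hiL : (i : ℝ) < (L : ℝ) := by exact_mod_cast mem_range.1 hi
          linarith
      _ = (M : ℝ) ^ L := by rw [prod_const, card_range]
  have hmain : (p ^ L / 2) * (M.choose L : ℝ) ≤ (m.choose L : ℝ) + θ * (m.choose l : ℝ) := by
    rw [← mul_le_mul_iff_right₀ hfactpos]
    have hfacsplit : (Nat.factorial L : ℝ) = (L : ℝ) * (Nat.factorial l : ℝ) := by
      rw [hLdef]
      push_cast [Nat.factorial_succ]
      ring
    have lhs_eq : (Nat.factorial L : ℝ) * ((p ^ L / 2) * (M.choose L : ℝ))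
        = (p ^ L / 2) * ∏ i ∈ range L, ((M : ℝ) - i) := by
      rw [hprod_M]; ring
    have rhs_eq : (Nat.factorial L : ℝ) * ((m.choose L : ℝ) + θ * (m.choose l : ℝ))
        = ∏ i ∈ range L, ((m : ℝ) - i) + θ * (L : ℝ) * ∏ i ∈ range l, ((m : ℝ) - i) := by
      rw [hprod_m, hprod_ml, hfacsplit]; ring
    rw [lhs_eq, rhs_eq]
    have step1 : (p ^ L / 2) * ∏ i ∈ range L, ((M : ℝ) - i) ≤ p ^ L / 2 * (M : ℝ) ^ L :=
      mul_le_mul_of_nonneg_left hMub (by positivity)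
    have step2 : p ^ L / 2 * (M : ℝ) ^ L = t ^ L / 2 := by
      rw [htdef, mul_pow]; ring
    calc (p ^ L / 2) * ∏ i ∈ range L, ((M : ℝ) - i) ≤ t ^ L / 2 := by rw [← step2]; exact step1
      _ ≤ ∏ i ∈ range L, (t - (i : ℝ)) := hlow
      _ ≤ _ := hconv
  -- final: by contradiction
  by_contra hcon
  push_neg at hcon
  have hApos : 0 < A.card := by
    rw [hAdef, card_powersetCard, card_univ, Fintype.card_fin]
    exact Nat.choose_pos hLMn
  have hAne : A.Nonempty := card_pos.1 hApos
  have hlt : ∑ J ∈ A, ((J.inf S).card : ℝ) < ∑ J ∈ A, (p ^ L / 2 * n) := by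
    refine Finset.sum_lt_sum_of_nonempty hAne fun J hJ => ?_
    have hJc : J.card = L := (mem_powersetCard.1 (by rwa [hAdef] at hJ)).2
    exact hcon J hJc
  rw [Finset.sum_const, nsmul_eq_mul] at hlt
  have hAcard : (A.card : ℝ) = (M.choose L : ℝ) := by
    rw [hAdef, card_powersetCard, card_univ, Fintype.card_fin]
  rw [hAcard] at hlt
  have hge : (M.choose L : ℝ) * (p ^ L / 2 * n) ≤ ∑ J ∈ A, ((J.inf S).card : ℝ) := by
    have e : ∑ J ∈ A, ((J.inf S).card : ℝ) = ∑ x : Fin n, ((d x).choose L : ℝ) := by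
      exact_mod_cast congrArg (Nat.cast : ℕ → ℝ) hcount2
    rw [e]
    have h5 : (M.choose L : ℝ) * (p ^ L / 2 * n)
        ≤ (n : ℝ) * ((m.choose L : ℝ) + θ * (m.choose l : ℝ)) := by
      have hn0 : (0 : ℝ) ≤ (n : ℝ) := Nat.cast_nonneg n
      have h6 := mul_le_mul_of_nonneg_left hmain hn0
      linarith [h6, (by ring : (M.choose L : ℝ) * (p ^ L / 2 * n)
        = (n : ℝ) * (p ^ L / 2 * (M.choose L : ℝ)))]
    exact le_trans h5 hline
  linarith
end

section
/- For every R ∈ (0,1) there exists a constant α > 0 such that for all sufficiently large n for which k = Rn is an integer: if q is a prime power, C ⊆ 𝔽_q^n is an 𝔽_q-linear code of dimension k with minimum distance n − k + 1 (i.e., C is a linear MDS code), and C is ((2/3)·(1−R), 2)-list-decodable, then q ≥ 2^{αn}. -/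
open Finset
set_option maxHeartbeats 1000000

lemma stmt18_hd_le {n : ℕ} {F : Type} [DecidableEq F] (x y : Fin n → F) (S : Finset (Fin n))
    (h : ∀ i, i ∉ S → x i = y i) : hammingDist x y ≤ S.card := by
  classical
  have : ({i | x i ≠ y i} : Finset (Fin n)) ⊆ S := by
    intro i hi
    simp only [mem_filter, mem_univ, true_and] at hi
    by_contra hiS
    exact hi (h i hiS)
  exact card_le_card this

lemma stmt18_two_pow_le_choose {r : ℕ} (hr : 4 ≤ r) : 2 ^ r ≤ (2 * r).choose r := by
  have h1 := Nat.four_pow_lt_mul_centralBinom r hr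
  have h2 : r < 2 ^ r := Nat.lt_two_pow_self
  have h4 : (4:ℕ)^r = 2^r * 2^r := by rw [← Nat.mul_pow]
  have h5 : 2^r * 2^r < 2^r * r.centralBinom := by
    calc 2^r * 2^r = 4^r := h4.symm
      _ < r * r.centralBinom := h1
      _ ≤ 2^r * r.centralBinom := Nat.mul_le_mul_right _ h2.le
  have := Nat.lt_of_mul_lt_mul_left h5
  rw [Nat.centralBinom_eq_two_mul_choose] at this
  exact this.le

lemma stmt18_aux_codeword {F : Type} [Field F] [Fintype F] [DecidableEq F] {n k : ℕ}
    (C : Submodule F (Fin n → F)) (hdim : Module.finrank F C = k)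
    (hdist : ∀ c₁ ∈ C, ∀ c₂ ∈ C, c₁ ≠ c₂ → n - k + 1 ≤ hammingDist c₁ c₂)
    (hk : 1 ≤ k) (hkn : k ≤ n)
    (A : Finset (Fin n)) (hA : A.card = k - 1) :
    ∃ u : Fin n → F, u ∈ C ∧ u ≠ 0 ∧ (∀ i ∈ A, u i = 0) ∧ (∀ i, i ∉ A → u i ≠ 0) := by
  classical
  set res : C →ₗ[F] ({ i // i ∈ A } → F) :=
    (LinearMap.funLeft F F (fun i : { i // i ∈ A } => (i : Fin n))).comp C.subtype with hres
  have hker : LinearMap.ker res ≠ ⊥ := by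
    intro hbot
    have hinj : Function.Injective res := LinearMap.ker_eq_bot.mp hbot
    have hle := LinearMap.finrank_le_finrank_of_injective hinj
    rw [hdim, Module.finrank_pi, Fintype.card_coe, hA] at hle
    omega
  obtain ⟨u₀, hu₀mem, hu₀ne⟩ := (Submodule.ne_bot_iff _).mp hker
  refine ⟨(u₀ : Fin n → F), u₀.2, ?_, ?_, ?_⟩
  · simpa using hu₀ne
  · intro i hi
    have := LinearMap.mem_ker.mp hu₀mem
    have := congrFun this ⟨i, hi⟩
    simpa [res] using this
  · intro i hiA hzero
    have hAzero : ∀ j ∈ A, (u₀ : Fin n → F) j = 0 := by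
      intro j hj
      have := LinearMap.mem_ker.mp hu₀mem
      have := congrFun this ⟨j, hj⟩
      simpa [res] using this
    have hune : (u₀ : Fin n → F) ≠ 0 := by simpa using hu₀ne
    have hlow := hdist (u₀ : Fin n → F) u₀.2 0 C.zero_mem hune
    have hup : hammingDist (u₀ : Fin n → F) 0 ≤ n - k := by
      have hsub : ({j | (u₀ : Fin n → F) j ≠ (0 : Fin n → F) j} : Finset (Fin n))
          ⊆ univ \ insert i A := by
        intro j hj
        simp only [mem_filter, mem_univ, true_and] at hj
        simp only [mem_sdiff, mem_univ, true_and, mem_insert]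
        rintro (rfl | hjA)
        · exact hj (by simpa using hzero)
        · exact hj (by simpa using hAzero j hjA)
      have hcard : (univ \ insert i A).card = n - k := by
        rw [card_sdiff_of_subset (subset_univ _), card_univ, Fintype.card_fin,
          card_insert_of_notMem hiA, hA]
        omega
      calc hammingDist (u₀ : Fin n → F) 0 ≤ (univ \ insert i A).card :=
            card_le_card hsub
        _ = n - k := hcard
    omega

theorem stmt_18 (R : ℝ) (hR0 : 0 < R) (hR1 : R < 1) :
    ∃ α > (0 : ℝ), ∃ n₀ : ℕ, ∀ n : ℕ, n₀ ≤ n → ∀ k : ℕ, (k : ℝ) = R * n →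
      ∀ (F : Type) [Field F] [Fintype F] [DecidableEq F],
        ∀ C : Submodule F (Fin n → F), Module.finrank F C = k →
          (∀ c₁ ∈ C, ∀ c₂ ∈ C, c₁ ≠ c₂ → n - k + 1 ≤ hammingDist c₁ c₂) →
          (∀ y : Fin n → F,
            Set.ncard {c : Fin n → F | c ∈ C ∧
              (hammingDist y c : ℝ) ≤ (2 / 3 : ℝ) * (1 - R) * n} ≤ 2) →
          (2 : ℝ) ^ (α * n) ≤ (Fintype.card F : ℝ) := by
  classical
  have hρ : 0 < min R (1 - R) := lt_min hR0 (by linarith)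
  set ρ := min R (1 - R) with hρdef
  refine ⟨ρ / 9, by positivity, ⌈(300:ℝ)/ρ⌉₊, ?_⟩
  intro n hn k hk F _ _ _ C hdim hdist hLD
  by_contra hq
  push_neg at hq
  -- basic numeric facts
  have hnR : (300:ℝ)/ρ ≤ (n:ℝ) := le_trans (Nat.le_ceil _) (by exact_mod_cast hn)
  have hρn : (300:ℝ) ≤ ρ * n := by
    rw [div_le_iff₀ hρ] at hnR
    linarith
  have hnpos : (0:ℝ) < n := by nlinarith [min_le_left R (1-R)]
  have hkR : (300:ℝ) ≤ (k:ℝ) := by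
    have : ρ * n ≤ R * n := by
      have := min_le_left R (1-R)
      nlinarith
    rw [hk]; linarith
  have hk300 : 300 ≤ k := by exact_mod_cast hkR
  have hkltn : k < n := by
    have : (k:ℝ) < n := by
      rw [hk]; nlinarith
    exact_mod_cast this
  set m := n - k with hm
  have hnkm : n = k + m := by omega
  have hmreal : (m:ℝ) = (1 - R) * n := by
    have : (m:ℝ) = (n:ℝ) - k := by
      rw [hm, Nat.cast_sub hkltn.le]
    rw [this, hk]; ring
  have hm300 : 300 ≤ m := by
    have : (300:ℝ) ≤ (m:ℝ) := by
      rw [hmreal]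
      have := min_le_right R (1-R)
      nlinarith
    exact_mod_cast this
  set c3 := (m + 2) / 3 with hc3
  set σ := c3 - 3 with hσ
  set t₀ := 2*σ + 2*k + 2 - n with ht₀
  set r := k - 1 - t₀ with hr
  have hc3m : 3 * c3 ≤ m + 2 ∧ m ≤ 3 * c3 := by omega
  have hrmin : min k m ≤ 3 * r := by omega
  have hr4 : 34 ≤ r := by omega
  -- the four distinguished points
  have h4n : 4 ≤ n := by omega
  obtain ⟨x1, hx1v⟩ : ∃ x : Fin n, (x:ℕ) = 0 := ⟨⟨0, by omega⟩, rfl⟩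
  obtain ⟨x2, hx2v⟩ : ∃ x : Fin n, (x:ℕ) = 1 := ⟨⟨1, by omega⟩, rfl⟩
  obtain ⟨x3, hx3v⟩ : ∃ x : Fin n, (x:ℕ) = 2 := ⟨⟨2, by omega⟩, rfl⟩
  obtain ⟨x4, hx4v⟩ : ∃ x : Fin n, (x:ℕ) = 3 := ⟨⟨3, by omega⟩, rfl⟩
  have hx12 : x1 ≠ x2 := by rw [Fin.ne_iff_vne _ _, hx1v, hx2v]; norm_num
  have hx13 : x1 ≠ x3 := by rw [Fin.ne_iff_vne _ _, hx1v, hx3v]; norm_num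
  have hx14 : x1 ≠ x4 := by rw [Fin.ne_iff_vne _ _, hx1v, hx4v]; norm_num
  have hx23 : x2 ≠ x3 := by rw [Fin.ne_iff_vne _ _, hx2v, hx3v]; norm_num
  have hx24 : x2 ≠ x4 := by rw [Fin.ne_iff_vne _ _, hx2v, hx4v]; norm_num
  have hx34 : x3 ≠ x4 := by rw [Fin.ne_iff_vne _ _, hx3v, hx4v]; norm_num
  set D : Finset (Fin n) := {x1, x2, x3, x4} with hD
  have hDcard : D.card = 4 := by
    rw [hD, card_insert_of_notMem (by simp [hx12, hx13, hx14]),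
      card_insert_of_notMem (by simp [hx23, hx24]),
      card_insert_of_notMem (by simp [hx34]), card_singleton]
  have hcardDc : (univ \ D).card = n - 4 := by
    rw [card_sdiff_of_subset (subset_univ _), card_univ, Fintype.card_fin, hDcard]
  obtain ⟨P₀, hP₀sub, hP₀card⟩ := exists_subset_card_eq (s := univ \ D) (n := t₀) (by omega)
  set Z := (univ \ D) \ P₀ with hZ
  have hZcard : Z.card = n - 4 - t₀ := by
    rw [hZ, card_sdiff_of_subset hP₀sub, hcardDc, hP₀card]
  set 𝒜 := Z.powersetCard r with h𝒜
  have h𝒜card : 𝒜.card = (n - 4 - t₀).choose r := by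
    rw [h𝒜, card_powersetCard, hZcard]
  -- existence of codewords vanishing exactly on prescribed (k-1)-sets
  have hexu : ∀ B : Finset (Fin n), B.card = k - 1 →
      ∃ u : Fin n → F, u ∈ C ∧ u ≠ 0 ∧ (∀ i ∈ B, u i = 0) ∧ (∀ i, i ∉ B → u i ≠ 0) :=
    fun B hB => stmt18_aux_codeword C hdim hdist (by omega) (by omega) B hB
  choose uf huf using hexu
  -- fingerprint map
  set f : Finset (Fin n) → F × F × F := fun B =>
    if h : (B ∪ P₀).card = k - 1 then
      (uf (B ∪ P₀) h x1 * (uf (B ∪ P₀) h x4)⁻¹,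
       uf (B ∪ P₀) h x2 * (uf (B ∪ P₀) h x4)⁻¹,
       uf (B ∪ P₀) h x3 * (uf (B ∪ P₀) h x4)⁻¹)
    else (0,0,0) with hf
  -- pigeonhole
  have hq2 : 2 ≤ Fintype.card F := Fintype.one_lt_card
  have hq3 : Fintype.card F ^ 3 < 2 ^ r := by
    have h1 : ((Fintype.card F : ℝ))^3 < ((2:ℝ) ^ (ρ/9 * (n:ℝ)))^3 := by
      apply pow_lt_pow_left₀ hq (by positivity) (by norm_num)
    have hrge : 3 * (ρ/9 * (n:ℝ)) ≤ (r:ℝ) := by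
      have hcast : ((min k m : ℕ):ℝ) ≤ ((3 * r : ℕ) : ℝ) := by exact_mod_cast hrmin
      have hmincast : ((min k m : ℕ):ℝ) = min (k:ℝ) (m:ℝ) := by
        simp [Nat.cast_min]
      have hρk : ρ * n ≤ (k:ℝ) := by
        rw [hk]
        have := min_le_left R (1-R)
        nlinarith
      have hρm : ρ * n ≤ (m:ℝ) := by
        rw [hmreal]
        have := min_le_right R (1-R)
        nlinarith
      have : ρ * n ≤ min (k:ℝ) (m:ℝ) := le_min hρk hρm
      rw [hmincast] at hcast
      push_cast at hcast
      linarith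
    have h2 : ((2:ℝ) ^ (ρ/9 * (n:ℝ)))^3 = (2:ℝ) ^ (3 * (ρ/9 * (n:ℝ))) := by
      rw [← Real.rpow_natCast ((2:ℝ) ^ (ρ/9 * (n:ℝ))) 3, ← Real.rpow_mul (by norm_num)]
      norm_num [mul_comm]
    have h3 : (2:ℝ) ^ (3 * (ρ/9 * (n:ℝ))) ≤ (2:ℝ) ^ ((r:ℕ):ℝ) :=
      Real.rpow_le_rpow_of_exponent_le one_le_two hrge
    have h4 : (2:ℝ) ^ ((r:ℕ):ℝ) = ((2^r : ℕ) : ℝ) := by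
      rw [Real.rpow_natCast]; push_cast; ring
    have : ((Fintype.card F ^ 3 : ℕ) : ℝ) < ((2^r : ℕ) : ℝ) := by
      push_cast
      calc ((Fintype.card F : ℝ))^3 < ((2:ℝ) ^ (ρ/9 * (n:ℝ)))^3 := h1
        _ = (2:ℝ) ^ (3 * (ρ/9 * (n:ℝ))) := h2
        _ ≤ (2:ℝ) ^ ((r:ℕ):ℝ) := h3
        _ = ((2^r : ℕ) : ℝ) := h4
        _ = (2:ℝ)^r := by push_cast; ring
    exact_mod_cast this
  have hlt : (univ : Finset (F × F × F)).card < 𝒜.card := by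
    rw [card_univ, h𝒜card]
    have hc1 : Fintype.card (F × F × F) = Fintype.card F ^ 3 := by
      simp [Fintype.card_prod]; ring
    rw [hc1]
    calc Fintype.card F ^ 3 < 2 ^ r := hq3
      _ ≤ (2*r).choose r := stmt18_two_pow_le_choose (by omega)
      _ ≤ (n - 4 - t₀).choose r := Nat.choose_le_choose r (by omega)
  obtain ⟨A, hA, B, hB, hABne, hfeq⟩ :=
    exists_ne_map_eq_of_card_lt_of_maps_to hlt (fun a _ => mem_univ (f a))
  -- unpack the two colliding sets
  rw [h𝒜, mem_powersetCard] at hA hB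
  obtain ⟨hAsub, hAcard⟩ := hA
  obtain ⟨hBsub, hBcard⟩ := hB
  have hZmem : ∀ i ∈ Z, i ∉ D ∧ i ∉ P₀ := by
    intro i hi
    rw [hZ] at hi
    simp only [mem_sdiff, mem_univ, true_and] at hi
    exact hi
  have hP₀D : ∀ i ∈ P₀, i ∉ D := by
    intro i hi
    have := hP₀sub hi
    simp only [mem_sdiff, mem_univ, true_and] at this
    exact this
  have hdisjAP : Disjoint A P₀ := by
    rw [disjoint_left]
    intro i hiA hiP
    exact (hZmem i (hAsub hiA)).2 hiP
  have hdisjBP : Disjoint B P₀ := by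
    rw [disjoint_left]
    intro i hiB hiP
    exact (hZmem i (hBsub hiB)).2 hiP
  have hAfcard : (A ∪ P₀).card = k - 1 := by
    rw [card_union_of_disjoint hdisjAP, hAcard, hP₀card]; omega
  have hBfcard : (B ∪ P₀).card = k - 1 := by
    rw [card_union_of_disjoint hdisjBP, hBcard, hP₀card]; omega
  have hDnotAf : ∀ i ∈ D, i ∉ A ∪ P₀ := by
    intro i hiD
    rw [mem_union]
    rintro (h | h)
    · exact (hZmem i (hAsub h)).1 hiD
    · exact hP₀D i h hiD
  have hDnotBf : ∀ i ∈ D, i ∉ B ∪ P₀ := by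
    intro i hiD
    rw [mem_union]
    rintro (h | h)
    · exact (hZmem i (hBsub h)).1 hiD
    · exact hP₀D i h hiD
  have hx1D : x1 ∈ D := by rw [hD]; simp
  have hx2D : x2 ∈ D := by rw [hD]; simp
  have hx3D : x3 ∈ D := by rw [hD]; simp
  have hx4D : x4 ∈ D := by rw [hD]; simp
  -- unfold the fingerprint equality
  simp only [hf] at hfeq
  rw [dif_pos hAfcard, dif_pos hBfcard, Prod.mk.injEq, Prod.mk.injEq] at hfeq
  obtain ⟨e1, e2, e3⟩ := hfeq
  obtain ⟨huAC, huAne, huAzero, huAnonzero⟩ := huf (A ∪ P₀) hAfcard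
  obtain ⟨huBC, huBne, huBzero, huBnonzero⟩ := huf (B ∪ P₀) hBfcard
  set uA := uf (A ∪ P₀) hAfcard with huAdef
  set uB := uf (B ∪ P₀) hBfcard with huBdef
  have huA4 : uA x4 ≠ 0 := huAnonzero x4 (hDnotAf x4 hx4D)
  have huB4 : uB x4 ≠ 0 := huBnonzero x4 (hDnotBf x4 hx4D)
  set lam := uA x4 * (uB x4)⁻¹ with hlam
  set v : Fin n → F := lam • uB with hv
  have hvC : v ∈ C := C.smul_mem _ huBC
  have hv4 : v x4 = uA x4 := by
    rw [hv]
    simp only [Pi.smul_apply, smul_eq_mul, hlam]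
    field_simp
  have hv1 : v x1 = uA x1 := by
    rw [hv]
    simp only [Pi.smul_apply, smul_eq_mul, hlam]
    field_simp at e1 ⊢
    first
      | linear_combination e1
      | linear_combination -e1
      | linear_combination e1.symm
  have hv2 : v x2 = uA x2 := by
    rw [hv]
    simp only [Pi.smul_apply, smul_eq_mul, hlam]
    field_simp at e2 ⊢
    first
      | linear_combination e2
      | linear_combination -e2
      | linear_combination e2.symm
  have hv3 : v x3 = uA x3 := by
    rw [hv]
    simp only [Pi.smul_apply, smul_eq_mul, hlam]
    field_simp at e3 ⊢
    first
      | linear_combination e3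
      | linear_combination -e3
      | linear_combination e3.symm
  have hvD : ∀ i ∈ D, v i = uA i := by
    intro i hi
    rw [hD] at hi
    simp only [mem_insert, mem_singleton] at hi
    rcases hi with rfl | rfl | rfl | rfl
    · exact hv1
    · exact hv2
    · exact hv3
    · exact hv4
  have hvzero : ∀ i ∈ B ∪ P₀, v i = 0 := by
    intro i hi
    rw [hv]
    simp [huBzero i hi]
  -- the three codewords are distinct
  have hBnotsub : ¬ B ⊆ A := by
    intro hsub
    exact hABne (Finset.eq_of_subset_of_card_le hsub (by omega)).symm
  obtain ⟨i0, hi0B, hi0A⟩ := Finset.not_subset.mp hBnotsub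
  have hi0Af : i0 ∉ A ∪ P₀ := by
    rw [mem_union]
    rintro (h | h)
    · exact hi0A h
    · exact (hZmem i0 (hBsub hi0B)).2 h
  have huAvne : uA ≠ v := by
    intro h
    have h1 : v i0 = 0 := hvzero i0 (mem_union_left _ hi0B)
    have h2 : uA i0 ≠ 0 := huAnonzero i0 hi0Af
    rw [h] at h2
    exact h2 h1
  have hvne0 : v ≠ 0 := by
    intro h
    apply huA4
    rw [← hv4, h]
    simp
  -- the sets Su, Sv
  set X := (A ∪ P₀) ∪ (B ∪ P₀) with hX
  have hDX : ∀ i ∈ D, i ∉ X := by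
    intro i hi
    rw [hX, mem_union]
    rintro (h | h)
    · exact hDnotAf i hi h
    · exact hDnotBf i hi h
  set Rest := (univ \ X) \ D with hRest
  have hDsub : D ⊆ univ \ X := by
    intro i hi
    rw [mem_sdiff]
    exact ⟨mem_univ _, hDX i hi⟩
  have hinter : t₀ ≤ ((A ∪ P₀) ∩ (B ∪ P₀)).card := by
    calc t₀ = P₀.card := hP₀card.symm
      _ ≤ _ := card_le_card (subset_inter subset_union_right subset_union_right)
  have hintercard : ((A ∪ P₀) ∩ (B ∪ P₀)).card ≤ k - 1 :=
    le_trans (card_le_card inter_subset_left) (le_of_eq hAfcard)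
  have hXc := card_union_add_card_inter (A ∪ P₀) (B ∪ P₀)
  rw [hAfcard, hBfcard, ← hX] at hXc
  have hRestcard : Rest.card = n - X.card - 4 := by
    rw [hRest, card_sdiff_of_subset hDsub, card_sdiff_of_subset (subset_univ _), card_univ, Fintype.card_fin, hDcard]
  have hXle : X.card ≤ n := by
    simpa using card_le_univ X
  have h2σRest : 2 * σ ≤ Rest.card := by omega
  obtain ⟨S2, hS2sub, hS2card⟩ := exists_subset_card_eq (s := Rest) (n := 2*σ) h2σRest
  obtain ⟨Su, hSusub, hSucard⟩ := exists_subset_card_eq (s := S2) (n := σ) (by omega)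
  set Sv := S2 \ Su with hSv
  have hSvcard : Sv.card = σ := by
    rw [hSv, card_sdiff_of_subset hSusub, hS2card]; omega
  have hSuRest : Su ⊆ Rest := hSusub.trans hS2sub
  have hSvRest : Sv ⊆ Rest := sdiff_subset.trans hS2sub
  have hSuSv : ∀ i ∈ Sv, i ∉ Su := by
    intro i hi
    rw [hSv, mem_sdiff] at hi
    exact hi.2
  have hRestmem : ∀ i ∈ Rest, i ∉ D ∧ i ∉ (A ∪ P₀) ∧ i ∉ (B ∪ P₀) := by
    intro i hi
    rw [hRest, mem_sdiff, mem_sdiff] at hi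
    refine ⟨hi.2, ?_, ?_⟩
    · intro h
      exact hi.1.2 (by rw [hX]; exact mem_union_left _ h)
    · intro h
      exact hi.1.2 (by rw [hX]; exact mem_union_right _ h)
  -- the received word y
  obtain ⟨y, hy⟩ : ∃ y : Fin n → F,
      y = fun z => if z ∈ D ∪ Su then uA z else if z ∈ Sv then v z else 0 := ⟨_, rfl⟩
  -- disjointness for cardinality counts
  have hdisjDSu : Disjoint D Su := by
    rw [disjoint_left]
    intro i hi hi'
    exact (hRestmem i (hSuRest hi')).1 hi
  have hdisjDSv : Disjoint D Sv := by
    rw [disjoint_left]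
    intro i hi hi'
    exact (hRestmem i (hSvRest hi')).1 hi
  have hdisjDSuAf : Disjoint (D ∪ Su) (A ∪ P₀) := by
    rw [disjoint_left]
    intro i hi hi'
    rcases mem_union.mp hi with h | h
    · exact hDnotAf i h hi'
    · exact (hRestmem i (hSuRest h)).2.1 hi'
  have hdisjDSvBf : Disjoint (D ∪ Sv) (B ∪ P₀) := by
    rw [disjoint_left]
    intro i hi hi'
    rcases mem_union.mp hi with h | h
    · exact hDnotBf i h hi'
    · exact (hRestmem i (hSvRest h)).2.2 hi'
  have hcard1 : ((D ∪ Su) ∪ (A ∪ P₀)).card = 4 + σ + (k-1) := by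
    rw [card_union_of_disjoint hdisjDSuAf, card_union_of_disjoint hdisjDSu,
      hDcard, hSucard, hAfcard]
  have hcard2 : ((D ∪ Sv) ∪ (B ∪ P₀)).card = 4 + σ + (k-1) := by
    rw [card_union_of_disjoint hdisjDSvBf, card_union_of_disjoint hdisjDSv,
      hDcard, hSvcard, hBfcard]
  -- distance bounds
  have hhd1 : hammingDist y uA ≤ n - (4 + σ + (k-1)) := by
    have hb := stmt18_hd_le y uA (univ \ ((D ∪ Su) ∪ (A ∪ P₀))) ?_
    · rwa [card_sdiff_of_subset (subset_univ _), card_univ, Fintype.card_fin, hcard1] at hb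
    · intro i hi
      have himem : i ∈ (D ∪ Su) ∪ (A ∪ P₀) := by
        by_contra hcon
        exact hi (mem_sdiff.mpr ⟨mem_univ _, hcon⟩)
      rcases mem_union.mp himem with h | h
      · rw [hy]; simp only [if_pos h]
      · have hiD : i ∉ D ∪ Su := by
          rw [mem_union]
          rintro (hd | hs)
          · exact hDnotAf i hd h
          · exact (hRestmem i (hSuRest hs)).2.1 h
        have hiSv : i ∉ Sv := fun hs => (hRestmem i (hSvRest hs)).2.1 h
        rw [hy]
        simp only [if_neg hiD, if_neg hiSv]
        exact (huAzero i h).symm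
  have hhd2 : hammingDist y v ≤ n - (4 + σ + (k-1)) := by
    have hb := stmt18_hd_le y v (univ \ ((D ∪ Sv) ∪ (B ∪ P₀))) ?_
    · rwa [card_sdiff_of_subset (subset_univ _), card_univ, Fintype.card_fin, hcard2] at hb
    · intro i hi
      have himem : i ∈ (D ∪ Sv) ∪ (B ∪ P₀) := by
        by_contra hcon
        exact hi (mem_sdiff.mpr ⟨mem_univ _, hcon⟩)
      rcases mem_union.mp himem with h | h
      · rcases mem_union.mp h with hd | hs
        · rw [hy]
          simp only [if_pos (mem_union_left _ hd)]
          exact (hvD i hd).symm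
        · have hiDSu : i ∉ D ∪ Su := by
            rw [mem_union]
            rintro (hd | hsu)
            · exact (hRestmem i (hSvRest hs)).1 hd
            · exact hSuSv i hs hsu
          rw [hy]
          simp only [if_neg hiDSu, if_pos hs]
      · have hiDSu : i ∉ D ∪ Su := by
          rw [mem_union]
          rintro (hd | hsu)
          · exact hDnotBf i hd h
          · exact (hRestmem i (hSuRest hsu)).2.2 h
        have hiSv : i ∉ Sv := fun hs => (hRestmem i (hSvRest hs)).2.2 h
        rw [hy]
        simp only [if_neg hiDSu, if_neg hiSv]
        exact (hvzero i h).symm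
  have hhd3 : hammingDist y 0 ≤ 4 + σ + σ := by
    have hb := stmt18_hd_le y 0 ((D ∪ Su) ∪ Sv) ?_
    · calc hammingDist y 0 ≤ ((D ∪ Su) ∪ Sv).card := hb
        _ ≤ (D ∪ Su).card + Sv.card := card_union_le _ _
        _ ≤ (D.card + Su.card) + Sv.card := Nat.add_le_add_right (card_union_le _ _) _
        _ = 4 + σ + σ := by rw [hDcard, hSucard, hSvcard]
    · intro i hi
      have h1 : i ∉ D ∪ Su := fun h => hi (mem_union_left _ h)
      have h2 : i ∉ Sv := fun h => hi (mem_union_right _ h)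
      rw [hy]
      simp only [if_neg h1, if_neg h2]
      simp
  -- real radius bound
  have hradius : (2/3 : ℝ) * (1 - R) * n = 2/3 * (m:ℝ) := by
    rw [mul_assoc, ← hmreal]
  have hball : ∀ c : Fin n → F, c ∈ C → 3 * hammingDist y c ≤ 2 * m →
      c ∈ {c : Fin n → F | c ∈ C ∧ (hammingDist y c : ℝ) ≤ (2 / 3 : ℝ) * (1 - R) * n} := by
    intro c hc hdc
    refine ⟨hc, ?_⟩
    rw [hradius]
    have hcast : ((3 * hammingDist y c : ℕ) : ℝ) ≤ ((2 * m : ℕ) : ℝ) := by exact_mod_cast hdc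
    push_cast at hcast
    linarith
  have hb1 : 3 * hammingDist y uA ≤ 2 * m := by omega
  have hb2 : 3 * hammingDist y v ≤ 2 * m := by omega
  have hb3 : 3 * hammingDist y (0 : Fin n → F) ≤ 2 * m := by omega
  have hsubset : ({0, uA, v} : Set (Fin n → F)) ⊆
      {c : Fin n → F | c ∈ C ∧ (hammingDist y c : ℝ) ≤ (2 / 3 : ℝ) * (1 - R) * n} := by
    intro c hc
    simp only [Set.mem_insert_iff, Set.mem_singleton_iff] at hc
    rcases hc with rfl | rfl | rfl
    · exact hball _ C.zero_mem hb3
    · exact hball _ huAC hb1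
    · exact hball _ hvC hb2
  have hne3 : ({0, uA, v} : Set (Fin n → F)).ncard = 3 := by
    rw [Set.ncard_eq_three]
    exact ⟨0, uA, v, Ne.symm huAne, Ne.symm hvne0, huAvne, rfl⟩
  have hmono := Set.ncard_le_ncard hsubset (Set.toFinite _)
  rw [hne3] at hmono
  have hLDy := hLD y
  omega
end
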